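/- arXiv:2311.03715 — 10 statements merged into one kernel-verified Lean document; each statement's English description precedes it below -/
import Mathlib

section
/- Let X be a compact metric space, c ∈ X, and f1, f2 : X → X continuous with f1(x) = c for all x ∈ X and f2(c) = c; let F = {f1, f2}. If p ∈ X is a periodic point of f2 (i.e., f2^m(p) = p for some m ≥ 1), then p is a periodic point of F, i.e., the deleted orbit {F^n(p) : n ≥ 1} is finite and p ∈ F^N(p) for some N ≥ 1. -/
open TopologicalSpace

/-- `mIter f₁ f₂ n x` is the set `F^n(x)` for the multiple mapping `F = {f₁, f₂}`:
all points `f_{i₁} ∘ ⋯ ∘ f_{iₙ} (x)` with `i₁, …, iₙ ∈ {1, 2}`. -/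
def mIter {X : Type*} (f₁ f₂ : X → X) : ℕ → X → Set X
  | 0, x => {x}
  | n + 1, x => f₁ '' mIter f₁ f₂ n x ∪ f₂ '' mIter f₁ f₂ n x

lemma mIter_finite {X : Type*} (f₁ f₂ : X → X) (n : ℕ) (x : X) :
    (mIter f₁ f₂ n x).Finite := by
  induction n with
  | zero => exact Set.finite_singleton x
  | succ n ih => exact (ih.image f₁).union (ih.image f₂)

lemma mIter_nonempty {X : Type*} (f₁ f₂ : X → X) (n : ℕ) (x : X) :
    (mIter f₁ f₂ n x).Nonempty := by
  induction n with
  | zero => exact ⟨x, rfl⟩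
  | succ n ih => exact (ih.image f₁).mono Set.subset_union_left

/-- `F^n(x)` as a nonempty compact subset of `X`. -/
def mIterNC {X : Type*} [TopologicalSpace X] (f₁ f₂ : X → X) (n : ℕ) (x : X) :
    NonemptyCompacts X :=
  ⟨⟨mIter f₁ f₂ n x, (mIter_finite f₁ f₂ n x).isCompact⟩, mIter_nonempty f₁ f₂ n x⟩

/-- The deleted orbit of `x` under `F = {f₁, f₂}`: the family `{F^n(x) : n ≥ 1}`. -/
def deletedOrbit {X : Type*} (f₁ f₂ : X → X) (x : X) : Set (Set X) :=
  {S | ∃ n, 1 ≤ n ∧ S = mIter f₁ f₂ n x}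

/-- `x` is a periodic point of `F = {f₁, f₂}`: its deleted orbit is finite and
`x ∈ F^m(x)` for some `m ≥ 1`. -/
def MPeriodicPt {X : Type*} (f₁ f₂ : X → X) (x : X) : Prop :=
  (deletedOrbit f₁ f₂ x).Finite ∧ ∃ m, 1 ≤ m ∧ x ∈ mIter f₁ f₂ m x

/-- `Ran(F) = {F^n(x) : n ≥ 1, x ∈ X}` as a set of nonempty compact subsets of `X`. -/
def mRan {X : Type*} [TopologicalSpace X] (f₁ f₂ : X → X) : Set (NonemptyCompacts X) :=
  {K | ∃ n, 1 ≤ n ∧ ∃ x, K = mIterNC f₁ f₂ n x}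

/-- Transitivity of the multiple mapping `F = {f₁, f₂}`: for every nonempty open
`U ⊆ X` and every nonempty relatively open subset `𝒰` of `Ran(F)` (in the Hausdorff
metric on nonempty compact subsets), there are `n ≥ 1` and `u ∈ U` with `F^n(u) ∈ 𝒰`. -/
def MTransitive {X : Type*} [MetricSpace X] (f₁ f₂ : X → X) : Prop :=
  ∀ U : Set X, IsOpen U → U.Nonempty →
    ∀ 𝒰 : Set (NonemptyCompacts X), 𝒰.Nonempty →
      (∃ V : Set (NonemptyCompacts X), IsOpen V ∧ 𝒰 = V ∩ mRan f₁ f₂) →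
      ∃ n, 1 ≤ n ∧ ∃ u ∈ U, mIterNC f₁ f₂ n u ∈ 𝒰

/-- Hausdorff metric sensitivity of the multiple mapping `F = {f₁, f₂}`;
`dist` on `NonemptyCompacts X` is the Hausdorff metric `d_H`. -/
def MSensitive {X : Type*} [MetricSpace X] (f₁ f₂ : X → X) : Prop :=
  ∃ δ > (0 : ℝ), ∀ U : Set X, IsOpen U → U.Nonempty →
    ∃ x ∈ U, ∃ y ∈ U, ∃ n, 1 ≤ n ∧ δ < dist (mIterNC f₁ f₂ n x) (mIterNC f₁ f₂ n y)

/-- Topological transitivity of a single map. -/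
def MapTransitive {X : Type*} [TopologicalSpace X] (f : X → X) : Prop :=
  ∀ U V : Set X, IsOpen U → U.Nonempty → IsOpen V → V.Nonempty →
    ∃ n, 1 ≤ n ∧ (f^[n] '' U ∩ V).Nonempty

/-- Sensitivity of a single map. -/
def MapSensitive {X : Type*} [MetricSpace X] (f : X → X) : Prop :=
  ∃ δ > (0 : ℝ), ∀ U : Set X, IsOpen U → U.Nonempty →
    ∃ x ∈ U, ∃ y ∈ U, ∃ n, 1 ≤ n ∧ δ < dist (f^[n] x) (f^[n] y)

/-- if `f₁ ≡ c` is constant, `f₂ c = c` and `p` is a periodic point of `f₂`,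
then `p` is a periodic point of `F = {f₁, f₂}`. -/
theorem stmt2 {X : Type*} [MetricSpace X] [CompactSpace X]
    (f₁ f₂ : X → X) (hf₁ : Continuous f₁) (hf₂ : Continuous f₂) (c : X)
    (hconst : ∀ x, f₁ x = c) (hfix : f₂ c = c) (p : X)
    (hp : ∃ m, 1 ≤ m ∧ f₂^[m] p = p) :
    MPeriodicPt f₁ f₂ p := by
  obtain ⟨m, hm, hper⟩ := hp
  have hperp : Function.IsPeriodicPt f₂ m p := hper
  -- key: for n ≥ 1, mIter f₁ f₂ n p = {c, f₂^[n] p}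
  have key : ∀ n, 1 ≤ n → mIter f₁ f₂ n p = {c, f₂^[n] p} := by
    intro n hn
    induction n with
    | zero => omega
    | succ k ih =>
      rcases Nat.eq_or_lt_of_le hn with h | h
      · simp only [← h]
        show f₁ '' {p} ∪ f₂ '' {p} = _
        simp [hconst p, Set.pair_comm]
      · have hk : 1 ≤ k := by omega
        show f₁ '' mIter f₁ f₂ k p ∪ f₂ '' mIter f₁ f₂ k p = _
        rw [ih hk]
        have h1 : f₁ '' ({c, f₂^[k] p} : Set X) = {c} := by
          ext y; simp [hconst, eq_comm]
        rw [h1]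
        simp [Set.image_insert_eq, hfix, Function.iterate_succ_apply', Set.pair_comm]
  constructor
  · apply Set.Finite.subset (((Set.finite_Iio m).image
      (fun k : ℕ => ({c, f₂^[k] p} : Set X))))
    rintro S ⟨n, hn, rfl⟩
    refine ⟨n % m, Nat.mod_lt _ (by omega), ?_⟩
    show ({c, f₂^[n % m] p} : Set X) = _
    rw [key n hn, hperp.iterate_mod_apply]
  · refine ⟨m, hm, ?_⟩
    rw [key m hm, hper]
    exact Or.inr rfl
end

section
/- Let X be a compact metric space, c ∈ X, and f1, f2 : X → X continuous with f1(x) = c for all x ∈ X and f2(c) = c; let F = {f1, f2}. If f2 is topologically transitive (for all nonempty open U, V ⊆ X there exists n ≥ 1 with f2^n(U) ∩ V ≠ ∅), then F is transitive: for every nonempty open set U ⊆ X and every nonempty relatively open subset 𝒰 of Ran(F) := {F^n(x) : n ≥ 1, x ∈ X}, regarded as a subspace of the space of nonempty compact subsets of X with the Hausdorff metric, there exist n ≥ 1 and u ∈ U with F^n(u) ∈ 𝒰. -/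
open TopologicalSpace

lemma mIter_pair {X : Type*} (f₁ f₂ : X → X) (c : X)
    (hconst : ∀ x, f₁ x = c) (hfix : f₂ c = c) :
    ∀ n, 1 ≤ n → ∀ x : X, mIter f₁ f₂ n x = {c, f₂^[n] x} := by
  intro n hn
  induction n with
  | zero => omega
  | succ n ih =>
    intro x
    rcases Nat.eq_zero_or_pos n with h | h
    · subst h
      show f₁ '' {x} ∪ f₂ '' {x} = _
      simp [hconst, Set.pair_comm]
    · show f₁ '' mIter f₁ f₂ n x ∪ f₂ '' mIter f₁ f₂ n x = _
      rw [ih h x]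
      rw [Function.iterate_succ_apply']
      ext y
      simp only [Set.image_insert_eq, Set.image_singleton, Set.mem_union,
        Set.mem_insert_iff, Set.mem_singleton_iff, hconst, hfix]
      tauto

lemma hausdorff_pair_le {X : Type*} [MetricSpace X] (c a b : X) :
    Metric.hausdorffDist ({c, a} : Set X) ({c, b} : Set X) ≤ dist a b := by
  apply Metric.hausdorffDist_le_of_mem_dist dist_nonneg
  · rintro x (rfl | rfl)
    · exact ⟨x, Or.inl rfl, by simpa using dist_nonneg⟩
    · exact ⟨b, Or.inr rfl, le_refl _⟩
  · rintro x (rfl | rfl)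
    · exact ⟨x, Or.inl rfl, by simpa using dist_nonneg⟩
    · exact ⟨a, Or.inr rfl, by rw [dist_comm]⟩

/-- if `f₁ ≡ c` is constant, `f₂ c = c` and `f₂` is topologically
transitive, then the multiple mapping `F = {f₁, f₂}` is transitive. -/
theorem stmt3 {X : Type*} [MetricSpace X] [CompactSpace X]
    (f₁ f₂ : X → X) (hf₁ : Continuous f₁) (hf₂ : Continuous f₂) (c : X)
    (hconst : ∀ x, f₁ x = c) (hfix : f₂ c = c)
    (htrans : MapTransitive f₂) :
    MTransitive f₁ f₂ := by
  intro U hU hUne 𝒰 h𝒰ne ⟨V, hV, h𝒰eq⟩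
  obtain ⟨K, hK⟩ := h𝒰ne
  rw [h𝒰eq] at hK
  obtain ⟨hKV, n₀, hn₀, x₀, rfl⟩ := hK
  obtain ⟨ε, hε, hball⟩ := Metric.isOpen_iff.mp hV _ hKV
  obtain ⟨n, hn, z, ⟨u, hu, rfl⟩, hzball⟩ :=
    htrans U (Metric.ball (f₂^[n₀] x₀) ε) hU hUne Metric.isOpen_ball
      ⟨_, Metric.mem_ball_self hε⟩
  refine ⟨n, hn, u, hu, ?_⟩
  rw [h𝒰eq]
  refine ⟨hball ?_, n, hn, u, rfl⟩
  rw [Metric.mem_ball]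
  have hd : dist (mIterNC f₁ f₂ n u) (mIterNC f₁ f₂ n₀ x₀)
      = Metric.hausdorffDist (mIter f₁ f₂ n u) (mIter f₁ f₂ n₀ x₀) := rfl
  rw [hd, mIter_pair f₁ f₂ c hconst hfix n hn, mIter_pair f₁ f₂ c hconst hfix n₀ hn₀]
  calc Metric.hausdorffDist ({c, f₂^[n] u} : Set X) {c, f₂^[n₀] x₀}
      ≤ dist (f₂^[n] u) (f₂^[n₀] x₀) := hausdorff_pair_le c _ _
    _ < ε := hzball
end

section
/- Let X be a compact metric space, f1, f2 : X → X continuous, and F = {f1, f2}. Suppose (i) F is transitive, (ii) the set P(F) of periodic points of F is dense in X, and (iii) there exist periodic points p1, p2 of F whose deleted-orbit unions ⋃_{n≥1} F^n(p1) and ⋃_{n≥1} F^n(p2) are disjoint. Then F is Hausdorff metric sensitive: there exists δ > 0 such that every nonempty open set U ⊆ X contains points x, y with d_H(F^n(x), F^n(y)) > δ for some n ≥ 1. -/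
open TopologicalSpace

lemma mIter_add {X : Type*} (f₁ f₂ : X → X) (k n : ℕ) (x : X) :
    mIter f₁ f₂ (k + n) x = ⋃ z ∈ mIter f₁ f₂ n x, mIter f₁ f₂ k z := by
  induction k with
  | zero =>
    simp only [Nat.zero_add]
    ext y
    simp [mIter]
  | succ k ih =>
    rw [show k + 1 + n = (k + n) + 1 from by omega]
    show f₁ '' mIter f₁ f₂ (k + n) x ∪ f₂ '' mIter f₁ f₂ (k + n) x = _
    rw [ih]
    ext y
    simp only [Set.mem_union, Set.mem_image, Set.mem_iUnion]
    constructor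
    · rintro (⟨w, ⟨z, hz, hw⟩, rfl⟩ | ⟨w, ⟨z, hz, hw⟩, rfl⟩)
      · exact ⟨z, hz, Or.inl ⟨w, hw, rfl⟩⟩
      · exact ⟨z, hz, Or.inr ⟨w, hw, rfl⟩⟩
    · rintro ⟨z, hz, (⟨w, hw, rfl⟩ | ⟨w, hw, rfl⟩)⟩
      · exact Or.inl ⟨w, ⟨z, hz, hw⟩, rfl⟩
      · exact Or.inr ⟨w, ⟨z, hz, hw⟩, rfl⟩

lemma isOpen_mIter_subset {X : Type*} [TopologicalSpace X] {f₁ f₂ : X → X}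
    (hf₁ : Continuous f₁) (hf₂ : Continuous f₂) (k : ℕ) {V : Set X} (hV : IsOpen V) :
    IsOpen {z | mIter f₁ f₂ k z ⊆ V} := by
  induction k generalizing V with
  | zero =>
    have : {z | mIter f₁ f₂ 0 z ⊆ V} = V := by
      ext z; simp [mIter]
    rw [this]; exact hV
  | succ k ih =>
    have : {z | mIter f₁ f₂ (k + 1) z ⊆ V} = {z | mIter f₁ f₂ k z ⊆ f₁ ⁻¹' V ∩ f₂ ⁻¹' V} := by
      ext z
      show f₁ '' mIter f₁ f₂ k z ∪ f₂ '' mIter f₁ f₂ k z ⊆ V ↔ _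
      simp only [Set.union_subset_iff, Set.image_subset_iff, Set.mem_setOf_eq,
        Set.subset_inter_iff]
    rw [this]
    exact ih ((hV.preimage hf₁).inter (hV.preimage hf₂))

lemma mIter_mul_self {X : Type*} {f₁ f₂ : X → X} {m : ℕ} {p : X}
    (hp : p ∈ mIter f₁ f₂ m p) : ∀ j, 1 ≤ j → p ∈ mIter f₁ f₂ (m * j) p := by
  intro j hj
  induction j with
  | zero => omega
  | succ j ih =>
    rcases Nat.eq_or_lt_of_le hj with h | h
    · rw [← h, Nat.mul_one]; exact hp
    · have hj1 : 1 ≤ j := by omega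
      have : m * (j + 1) = m + m * j := by ring
      rw [this, mIter_add]
      exact Set.mem_biUnion (ih hj1) hp

lemma isOpen_nc_subset {X : Type*} [MetricSpace X] {W : Set X} (hW : IsOpen W) :
    IsOpen {K : NonemptyCompacts X | (K : Set X) ⊆ W} := by
  rw [Metric.isOpen_iff]
  intro K hK
  obtain ⟨ε, hε, hthick⟩ := K.isCompact.exists_thickening_subset_open hW hK
  refine ⟨ε, hε, fun K' hK' => ?_⟩
  intro y hy
  have hfin : EMetric.hausdorffEdist (K' : Set X) (K : Set X) ≠ ⊤ :=
    Metric.hausdorffEdist_ne_top_of_nonempty_of_bounded K'.nonempty K.nonempty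
      K'.isCompact.isBounded K.isCompact.isBounded
  have h1 : Metric.infDist y (K : Set X) ≤ Metric.hausdorffDist (K' : Set X) (K : Set X) :=
    Metric.infDist_le_hausdorffDist_of_mem hy hfin
  have h2 : Metric.hausdorffDist (K' : Set X) (K : Set X) < ε := by
    rw [← Metric.NonemptyCompacts.dist_eq]
    exact Metric.mem_ball.mp hK'
  exact hthick ((Metric.mem_thickening_iff_infDist_lt K.nonempty).2 (lt_of_le_of_lt h1 h2))

/-- if `F = {f₁, f₂}` is transitive, its periodic points are dense, and
there are two periodic points whose deleted-orbit unions are disjoint, then `F` is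
Hausdorff metric sensitive. -/
theorem stmt5 {X : Type*} [MetricSpace X] [CompactSpace X]
    (f₁ f₂ : X → X) (hf₁ : Continuous f₁) (hf₂ : Continuous f₂)
    (htrans : MTransitive f₁ f₂)
    (hdense : Dense {x | MPeriodicPt f₁ f₂ x})
    (p₁ p₂ : X) (hp₁ : MPeriodicPt f₁ f₂ p₁) (hp₂ : MPeriodicPt f₁ f₂ p₂)
    (hdisj : Disjoint (⋃ n ≥ 1, mIter f₁ f₂ n p₁) (⋃ n ≥ 1, mIter f₁ f₂ n p₂)) :
    MSensitive f₁ f₂ := by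
  classical
  -- orbit unions are finite
  have horbfin : ∀ p : X, MPeriodicPt f₁ f₂ p → (⋃ n ≥ 1, mIter f₁ f₂ n p).Finite := by
    intro p hp
    have heq : (⋃ n ≥ 1, mIter f₁ f₂ n p) = ⋃₀ deletedOrbit f₁ f₂ p := by
      ext y
      simp only [Set.mem_iUnion, Set.mem_sUnion, deletedOrbit, Set.mem_setOf_eq]
      constructor
      · rintro ⟨n, hn, hy⟩; exact ⟨mIter f₁ f₂ n p, ⟨n, hn, rfl⟩, hy⟩
      · rintro ⟨S, ⟨n, hn, rfl⟩, hy⟩; exact ⟨n, hn, hy⟩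
    rw [heq]
    exact hp.1.sUnion (by rintro S ⟨n, _, rfl⟩; exact mIter_finite f₁ f₂ n p)
  -- forward invariance of orbit unions
  have hinv : ∀ p : X, ∀ z ∈ (⋃ n ≥ 1, mIter f₁ f₂ n p), ∀ k,
      mIter f₁ f₂ k z ⊆ ⋃ n ≥ 1, mIter f₁ f₂ n p := by
    intro p z hz k y hy
    simp only [Set.mem_iUnion] at hz
    obtain ⟨n, hn, hz⟩ := hz
    have hy' : y ∈ mIter f₁ f₂ (k + n) p := by
      rw [mIter_add]; exact Set.mem_biUnion hz hy
    exact Set.mem_biUnion (show (1 : ℕ) ≤ k + n by omega) hy'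
  -- positive separation between the two orbit unions
  have hO₂closed : IsClosed (⋃ n ≥ 1, mIter f₁ f₂ n p₂) := (horbfin p₂ hp₂).isClosed
  have hsubc : (⋃ n ≥ 1, mIter f₁ f₂ n p₁) ⊆ (⋃ n ≥ 1, mIter f₁ f₂ n p₂)ᶜ :=
    Set.subset_compl_iff_disjoint_right.mpr hdisj.symm.symm
  obtain ⟨ε, hε, hthick⟩ :=
    (horbfin p₁ hp₁).isCompact.exists_thickening_subset_open hO₂closed.isOpen_compl hsubc
  have hsep : ∀ a ∈ (⋃ n ≥ 1, mIter f₁ f₂ n p₁), ∀ b ∈ (⋃ n ≥ 1, mIter f₁ f₂ n p₂),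
      ε ≤ dist a b := by
    intro a ha b hb
    by_contra h
    push_neg at h
    have : b ∈ Metric.thickening ε (⋃ n ≥ 1, mIter f₁ f₂ n p₁) :=
      Metric.mem_thickening_iff.mpr ⟨a, ha, by rwa [dist_comm]⟩
    exact hthick this hb
  refine ⟨ε / 8, by linarith, fun U hU hUne => ?_⟩
  obtain ⟨x, hx⟩ := hUne
  -- one of the two orbits is far from x
  have hfar : ∃ q : X, MPeriodicPt f₁ f₂ q ∧
      ∀ z ∈ (⋃ n ≥ 1, mIter f₁ f₂ n q), ε / 2 ≤ dist x z := by
    by_contra h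
    push_neg at h
    obtain ⟨a, ha, hda⟩ := h p₁ hp₁
    obtain ⟨b, hb, hdb⟩ := h p₂ hp₂
    have := hsep a ha b hb
    have htr : dist a b ≤ dist a x + dist x b := dist_triangle a x b
    rw [dist_comm a x] at htr
    linarith
  obtain ⟨q, hq, hfar⟩ := hfar
  set O : Set X := ⋃ n ≥ 1, mIter f₁ f₂ n q with hOdef
  -- a periodic point close to x inside U
  obtain ⟨p', hp'per, hp'U, hp'ball⟩ :
      ∃ p', MPeriodicPt f₁ f₂ p' ∧ p' ∈ U ∧ p' ∈ Metric.ball x (ε / 8) := by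
    obtain ⟨p', hper, hmem⟩ := hdense.exists_mem_open
      (hU.inter (Metric.isOpen_ball : IsOpen (Metric.ball x (ε / 8))))
      ⟨x, hx, Metric.mem_ball_self (by linarith)⟩
    exact ⟨p', hper, hmem.1, hmem.2⟩
  obtain ⟨_, m, hm1, hpm⟩ := hp'per
  -- the open set W
  set B : Set X := Metric.thickening (ε / 8) O with hBdef
  have hB : IsOpen B := Metric.isOpen_thickening
  set W : Set X := ⋂ k ∈ Finset.range (m + 1), {z | mIter f₁ f₂ k z ⊆ B} with hWdef
  have hW : IsOpen W := isOpen_biInter_finset (fun k _ => isOpen_mIter_subset hf₁ hf₂ k hB)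
  have hOW : O ⊆ W := by
    intro z hz
    simp only [hWdef, Set.mem_iInter, Set.mem_setOf_eq]
    intro k _
    exact (hinv q z hz k).trans (Metric.self_subset_thickening (by linarith) O)
  -- apply transitivity
  set 𝒰 : Set (NonemptyCompacts X) := {K | (K : Set X) ⊆ W} ∩ mRan f₁ f₂ with h𝒰def
  have h𝒰ne : 𝒰.Nonempty := by
    refine ⟨mIterNC f₁ f₂ 1 q, ?_, 1, le_refl 1, q, rfl⟩
    show mIter f₁ f₂ 1 q ⊆ W
    exact (fun y hy => hOW (Set.mem_biUnion (le_refl 1) hy))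
  obtain ⟨n, hn1, u, humem, hunc⟩ := htrans (U ∩ Metric.ball x (ε / 8))
    (hU.inter Metric.isOpen_ball) ⟨x, hx, Metric.mem_ball_self (by linarith)⟩
    𝒰 h𝒰ne ⟨{K | (K : Set X) ⊆ W}, isOpen_nc_subset hW, rfl⟩
  obtain ⟨huU, huball⟩ := humem
  have huW : mIter f₁ f₂ n u ⊆ W := hunc.1
  -- choose the time N
  have hdm1 : n ≤ m * (n / m + 1) := by
    have h := Nat.div_add_mod n m
    have h2 : n % m < m := Nat.mod_lt _ (by omega)
    rw [Nat.mul_succ]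
    omega
  have hdm2 : m * (n / m + 1) ≤ n + m := by
    have h : n / m * m ≤ n := Nat.div_mul_le_self n m
    have h' : m * (n / m) = n / m * m := Nat.mul_comm _ _
    rw [Nat.mul_succ]
    omega
  obtain ⟨N, k, hkn, hkm, hpN⟩ :
      ∃ N k, N = k + n ∧ k ≤ m ∧ p' ∈ mIter f₁ f₂ N p' :=
    ⟨m * (n / m + 1), m * (n / m + 1) - n, (Nat.sub_add_cancel hdm1).symm,
      Nat.sub_le_iff_le_add.mpr (hdm2.trans_eq (Nat.add_comm n m)),
      mIter_mul_self hpm (n / m + 1) (Nat.le_add_left 1 _)⟩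
  have hsubB : mIter f₁ f₂ N u ⊆ B := by
    rw [hkn, mIter_add]
    intro y hy
    simp only [Set.mem_iUnion] at hy
    obtain ⟨z, hz, hy⟩ := hy
    have hzW := huW hz
    simp only [hWdef, Set.mem_iInter, Set.mem_setOf_eq] at hzW
    exact hzW k (Finset.mem_range.mpr (by omega)) hy
  refine ⟨p', hp'U, u, huU, N, by omega, ?_⟩
  -- lower bound on distances from p' to points of F^N(u)
  have hlow : ∀ y ∈ mIter f₁ f₂ N u, ε / 4 ≤ dist p' y := by
    intro y hy
    obtain ⟨z, hz, hdz⟩ := Metric.mem_thickening_iff.mp (hsubB hy)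
    have h1 := hfar z hz
    have h2 : dist p' x < ε / 8 := Metric.mem_ball.mp hp'ball
    have htr : dist x z ≤ dist x p' + dist p' y + dist y z := dist_triangle4 x p' y z
    rw [dist_comm x p'] at htr
    linarith
  have hinf : ε / 4 ≤ Metric.infDist p' (mIter f₁ f₂ N u) := by
    by_contra h
    push_neg at h
    obtain ⟨y, hy, hdy⟩ := (Metric.infDist_lt_iff (mIter_nonempty f₁ f₂ N u)).mp h
    linarith [hlow y hy]
  have hfin : EMetric.hausdorffEdist ((mIterNC f₁ f₂ N p' : Set X))
      ((mIterNC f₁ f₂ N u : Set X)) ≠ ⊤ :=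
    Metric.hausdorffEdist_ne_top_of_nonempty_of_bounded (mIterNC f₁ f₂ N p').nonempty
      (mIterNC f₁ f₂ N u).nonempty (mIterNC f₁ f₂ N p').isCompact.isBounded
      (mIterNC f₁ f₂ N u).isCompact.isBounded
  have hH : Metric.infDist p' ((mIterNC f₁ f₂ N u : Set X)) ≤
      dist (mIterNC f₁ f₂ N p') (mIterNC f₁ f₂ N u) := by
    rw [Metric.NonemptyCompacts.dist_eq]
    exact Metric.infDist_le_hausdorffDist_of_mem hpN hfin
  have : Metric.infDist p' ((mIterNC f₁ f₂ N u : Set X)) =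
      Metric.infDist p' (mIter f₁ f₂ N u) := rfl
  linarith [hinf, hH, this ▸ hH]
end

section
/- Let X be a compact metric space, c ∈ X, and f1, f2 : X → X continuous with f1(x) = c for all x ∈ X and f2(c) = c; let F = {f1, f2}. If f2 is Devaney chaotic (transitive, with dense periodic points, and sensitive), then F is Devaney chaotic: F is transitive, the set P(F) of periodic points of F is dense in X, and F is Hausdorff metric sensitive. -/
open TopologicalSpace

section Aux
open Metric Set

variable {X : Type*} [MetricSpace X]

lemma pair_haus_le (c a b : X) :
    hausdorffDist ({c, a} : Set X) {c, b} ≤ dist a b := by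
  apply hausdorffDist_le_of_mem_dist dist_nonneg
  · intro x hx
    simp only [Set.mem_insert_iff, Set.mem_singleton_iff] at hx
    rcases hx with rfl | rfl
    · exact ⟨x, by simp, by simpa using dist_nonneg⟩
    · exact ⟨b, by simp, le_refl _⟩
  · intro x hx
    simp only [Set.mem_insert_iff, Set.mem_singleton_iff] at hx
    rcases hx with rfl | rfl
    · exact ⟨x, by simp, by simpa using dist_nonneg⟩
    · exact ⟨a, by simp, by rw [dist_comm]⟩

lemma mIter_eq {f₁ f₂ : X → X} {c : X} (hconst : ∀ x, f₁ x = c) (hfix : f₂ c = c)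
    (n : ℕ) (hn : 1 ≤ n) (x : X) : mIter f₁ f₂ n x = {c, f₂^[n] x} := by
  induction n, hn using Nat.le_induction with
  | base =>
    show f₁ '' {x} ∪ f₂ '' {x} = _
    simp [hconst, Set.pair_comm]
  | succ n hn ih =>
    show f₁ '' mIter f₁ f₂ n x ∪ f₂ '' mIter f₁ f₂ n x = _
    rw [ih, Set.image_pair, Set.image_pair, hconst, hconst, hfix,
      Function.iterate_succ_apply']
    ext y
    simp only [Set.mem_union, Set.mem_insert_iff, Set.mem_singleton_iff]
    tauto

end Aux

/-- if `f₁ ≡ c` is constant, `f₂ c = c` and `f₂` is Devaney chaotic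
(transitive, dense periodic points, sensitive), then `F = {f₁, f₂}` is Devaney
chaotic: transitive, with `P(F)` dense in `X`, and Hausdorff metric sensitive. -/
theorem stmt6 {X : Type*} [MetricSpace X] [CompactSpace X]
    (f₁ f₂ : X → X) (hf₁ : Continuous f₁) (hf₂ : Continuous f₂) (c : X)
    (hconst : ∀ x, f₁ x = c) (hfix : f₂ c = c)
    (htrans : MapTransitive f₂)
    (hdense : Dense {x | ∃ n, 1 ≤ n ∧ f₂^[n] x = x})
    (hsens : MapSensitive f₂) :
    MTransitive f₁ f₂ ∧ Dense {x | MPeriodicPt f₁ f₂ x} ∧ MSensitive f₁ f₂ := by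
  have key := mIter_eq hconst hfix
  have keyNC : ∀ n, 1 ≤ n → ∀ m, 1 ≤ m → ∀ x y : X,
      dist (mIterNC f₁ f₂ n x) (mIterNC f₁ f₂ m y)
        = Metric.hausdorffDist ({c, f₂^[n] x} : Set X) {c, f₂^[m] y} := by
    intro n hn m hm x y
    rw [Metric.NonemptyCompacts.dist_eq]
    show Metric.hausdorffDist (mIter f₁ f₂ n x) (mIter f₁ f₂ m y) = _
    rw [key n hn x, key m hm y]
  refine ⟨?_, ?_, ?_⟩
  · -- transitivity
    rintro U hU hUne 𝒰 h𝒰ne ⟨V, hV, rfl⟩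
    obtain ⟨K, hKV, n, hn, x, rfl⟩ := h𝒰ne
    obtain ⟨ε, hε, hball⟩ := Metric.isOpen_iff.1 hV _ hKV
    obtain ⟨m, hm, z, ⟨u, hu, rfl⟩, hz⟩ :=
      htrans U (Metric.ball (f₂^[n] x) ε) hU hUne Metric.isOpen_ball
        ⟨_, Metric.mem_ball_self hε⟩
    refine ⟨m, hm, u, hu, hball ?_, m, hm, u, rfl⟩
    rw [Metric.mem_ball, keyNC m hm n hn]
    calc Metric.hausdorffDist ({c, f₂^[m] u} : Set X) {c, f₂^[n] x}
        ≤ dist (f₂^[m] u) (f₂^[n] x) := pair_haus_le c _ _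
      _ < ε := hz
  · -- dense periodic points
    refine hdense.mono ?_
    rintro x ⟨m, hm, hmx⟩
    have hp : Function.IsPeriodicPt f₂ m x := hmx
    constructor
    · apply Set.Finite.subset ((Set.finite_Iio m).image
        (fun r => ({c, f₂^[r] x} : Set X)))
      rintro S ⟨n, hn, rfl⟩
      refine ⟨n % m, Nat.mod_lt _ hm, ?_⟩
      show ({c, f₂^[n % m] x} : Set X) = _
      rw [hp.iterate_mod_apply]
      exact (key n hn x).symm
    · exact ⟨m, hm, by rw [key m hm x, hmx]; exact Or.inr rfl⟩
  · -- sensitivity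
    obtain ⟨δ, hδ, hs⟩ := hsens
    refine ⟨δ / 2, by linarith, fun U hU hUne => ?_⟩
    obtain ⟨x, hx, y, hy, n, hn, hd⟩ := hs U hU hUne
    refine ⟨x, hx, y, hy, n, hn, ?_⟩
    rw [keyNC n hn n hn]
    set a := f₂^[n] x
    set b := f₂^[n] y
    by_contra hcon
    push_neg at hcon
    have hfin : EMetric.hausdorffEdist ({c, a} : Set X) {c, b} ≠ ⊤ :=
      Metric.hausdorffEdist_ne_top_of_nonempty_of_bounded
        ⟨c, Set.mem_insert c _⟩ ⟨c, Set.mem_insert c _⟩ (Set.toFinite _).isBounded (Set.toFinite _).isBounded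
    have hac : dist a c ≤ δ / 2 := by
      have h1 : Metric.infDist a ({c, b} : Set X) ≤ δ / 2 :=
        le_trans (Metric.infDist_le_hausdorffDist_of_mem (show a ∈ ({c, a} : Set X) by simp) hfin) hcon
      obtain ⟨w, hw, hweq⟩ := (Set.toFinite ({c, b} : Set X)).isCompact.exists_infDist_eq_dist
        ⟨c, Set.mem_insert c _⟩ a
      rw [hweq] at h1
      rcases hw with rfl | hw
      · exact h1
      · rw [Set.mem_singleton_iff] at hw; subst hw; linarith
    have hbc : dist b c ≤ δ / 2 := by
      have h1 : Metric.infDist b ({c, a} : Set X) ≤ δ / 2 := by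
        refine le_trans (Metric.infDist_le_hausdorffDist_of_mem (show b ∈ ({c, b} : Set X) by simp) ?_) ?_
        · rwa [EMetric.hausdorffEdist_comm]
        · rwa [Metric.hausdorffDist_comm]
      obtain ⟨w, hw, hweq⟩ := (Set.toFinite ({c, a} : Set X)).isCompact.exists_infDist_eq_dist
        ⟨c, Set.mem_insert c _⟩ b
      rw [hweq] at h1
      rcases hw with rfl | hw
      · exact h1
      · rw [Set.mem_singleton_iff] at hw; subst hw; rw [dist_comm] at h1; linarith
    have := dist_triangle a c b
    rw [dist_comm b c] at hbc
    linarith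
end

section
/- On X = [0,1], let f1 be the tent map (f1(x) = 2x for 0 ≤ x ≤ 1/2 and f1(x) = 2 − 2x for 1/2 < x ≤ 1) and let f2(x) = 1 − 2x for 0 ≤ x ≤ 1/2 and f2(x) = 2x − 1 for 1/2 < x ≤ 1 (so f2 = 1 − f1). Then for every x ∈ [0,1] and every n ≥ 1, F^n(x) = {f1^n(x), f2^n(x)} and f1^n(x) + f2^n(x) = 1, where F = {f1, f2}. -/
open TopologicalSpace

/-- The unit interval `[0,1]` with the Euclidean metric. -/
abbrev UI : Type := Set.Icc (0 : ℝ) 1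

/-- The tent map on `[0,1]`: `2x` for `x ≤ 1/2`, `2 - 2x` for `x > 1/2`. -/
noncomputable def tent (x : UI) : UI :=
  ⟨if (x : ℝ) ≤ 1 / 2 then 2 * x else 2 - 2 * x, by
    have h0 := x.2.1; have h1 := x.2.2
    split_ifs with h <;> exact ⟨by nlinarith, by nlinarith⟩⟩

/-- The map `x ↦ 1 - tent x` on `[0,1]`: `1 - 2x` for `x ≤ 1/2`, `2x - 1` for `x > 1/2`. -/
noncomputable def tentc (x : UI) : UI :=
  ⟨if (x : ℝ) ≤ 1 / 2 then 1 - 2 * x else 2 * x - 1, by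
    have h0 := x.2.1; have h1 := x.2.2
    split_ifs with h <;> exact ⟨by nlinarith, by nlinarith⟩⟩

/-- The map `x ↦ min (2x) 1` on `[0,1]`. -/
noncomputable def mmap₁ (x : UI) : UI :=
  ⟨min (2 * x) 1, le_min (by have := x.2.1; linarith) zero_le_one, min_le_right _ _⟩

/-- The map `x ↦ min (2 - 2x) 1` on `[0,1]`. -/
noncomputable def mmap₂ (x : UI) : UI :=
  ⟨min (2 - 2 * x) 1, le_min (by have := x.2.2; linarith) zero_le_one, min_le_right _ _⟩

lemma tent_add_tentc (x : UI) : (tent x : ℝ) + (tentc x : ℝ) = 1 := by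
  simp only [tent, tentc]
  split_ifs <;> ring

lemma tent_symm (a b : UI) (h : (a : ℝ) + (b : ℝ) = 1) : tent a = tent b := by
  apply Subtype.ext
  simp only [tent]
  split_ifs <;> linarith

lemma tentc_symm (a b : UI) (h : (a : ℝ) + (b : ℝ) = 1) : tentc a = tentc b := by
  apply Subtype.ext
  simp only [tentc]
  split_ifs <;> linarith

/-- for the tent map `f₁ = tent` and `f₂ = 1 - tent` on `[0,1]`,
`F^n(x) = {f₁^n(x), f₂^n(x)}` and `f₁^n(x) + f₂^n(x) = 1` for all `x` and `n ≥ 1`. -/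
theorem stmt7 (x : UI) (n : ℕ) (hn : 1 ≤ n) :
    mIter tent tentc n x = {tent^[n] x, tentc^[n] x} ∧
    ((tent^[n] x : ℝ) + (tentc^[n] x : ℝ) = 1) := by
  induction n, hn using Nat.le_induction with
  | base =>
    refine ⟨?_, by simpa using tent_add_tentc x⟩
    show tent '' mIter tent tentc 0 x ∪ tentc '' mIter tent tentc 0 x = _
    simp [mIter, Set.pair_comm]
  | succ n hn ih =>
    obtain ⟨hset, hsum⟩ := ih
    set a := tent^[n] x with ha
    set b := tentc^[n] x with hb
    have hA : tent^[n+1] x = tent a := Function.iterate_succ_apply' tent n x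
    have hB : tentc^[n+1] x = tentc a := by
      rw [Function.iterate_succ_apply', ← hb, tentc_symm b a (by linarith)]
    have h1 : mIter tent tentc (n+1) x = tent '' {a, b} ∪ tentc '' {a, b} := by
      show tent '' mIter tent tentc n x ∪ tentc '' mIter tent tentc n x = _
      rw [hset]
    rw [h1, Set.image_pair, Set.image_pair, tent_symm b a (by linarith),
      tentc_symm b a (by linarith), hA, hB]
    refine ⟨?_, tent_add_tentc a⟩
    ext y
    simp [Set.mem_insert_iff]
    tauto
end

section
/- On X = [0,1], let f1 be the tent map (f1(x) = 2x for 0 ≤ x ≤ 1/2 and f1(x) = 2 − 2x for 1/2 < x ≤ 1) and let f2(x) = 1 − 2x for 0 ≤ x ≤ 1/2 and f2(x) = 2x − 1 for 1/2 < x ≤ 1 (so f2 = 1 − f1). Then the multiple mapping F = {f1, f2} is Hausdorff metric sensitive: there exists δ > 0 such that every nonempty open U ⊆ [0,1] contains points x, y with d_H(F^n(x), F^n(y)) > δ for some n ≥ 1. -/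
open TopologicalSpace

noncomputable def conj' (x : UI) : UI := ⟨1 - x, by have := x.2.1; have := x.2.2; constructor <;> simp <;> linarith⟩

lemma tent_coe (x : UI) : (tent x : ℝ) = if (x:ℝ) ≤ 1/2 then 2*(x:ℝ) else 2-2*(x:ℝ) := rfl
lemma tentc_coe (x : UI) : (tentc x : ℝ) = if (x:ℝ) ≤ 1/2 then 1-2*(x:ℝ) else 2*(x:ℝ)-1 := rfl
lemma conj'_coe (x : UI) : (conj' x : ℝ) = 1 - (x:ℝ) := rfl

lemma tentc_eq (x : UI) : tentc x = conj' (tent x) := by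
  have h0 := x.2.1; have h1 := x.2.2
  rw [Subtype.ext_iff, tentc_coe, conj'_coe, tent_coe]
  split_ifs with h <;> ring
lemma tent_conj (x : UI) : tent (conj' x) = tent x := by
  have h0 := x.2.1; have h1 := x.2.2
  rw [Subtype.ext_iff, tent_coe, tent_coe, conj'_coe]
  split_ifs with h h' <;> linarith
lemma tentc_conj (x : UI) : tentc (conj' x) = tentc x := by
  have h0 := x.2.1; have h1 := x.2.2
  rw [Subtype.ext_iff, tentc_coe, tentc_coe, conj'_coe]
  split_ifs with h h' <;> linarith

lemma key (n : ℕ) : ∀ (j : ℕ), j ≤ 2^(n+1) → ∀ (x : UI), (x:ℝ) = j / 2^(n+1) →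
    ∃ j', j' ≤ 2 ∧ j' % 2 = j % 2 ∧ ((tent^[n] x : ℝ) = j'/2) := by
  induction n with
  | zero => intro j hj x hx; exact ⟨j, hj, rfl, by simpa using hx⟩
  | succ n ih =>
    intro j hj x hx
    have hpow : (0:ℝ) < 2^(n+2) := by positivity
    have h2 : (2:ℝ)^(n+2) = 2 * 2^(n+1) := by ring
    rw [Function.iterate_succ_apply]
    by_cases hc : j ≤ 2^(n+1)
    · have hx2 : (x:ℝ) ≤ 1/2 := by
        rw [hx, div_le_div_iff₀ hpow (by norm_num), h2]
        have hjc : (j:ℝ) ≤ 2^(n+1) := by exact_mod_cast hc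
        push_cast
        linarith
      have ht : ((tent x : ℝ)) = j / 2^(n+1) := by
        rw [tent_coe, if_pos hx2, hx]; field_simp; ring
      exact ih j hc (tent x) ht
    · push_neg at hc
      have hj2 : j ≤ 2^(n+2) := hj
      have hc' : (2:ℝ)^(n+1) < j := by exact_mod_cast hc
      have hx2 : ¬ ((x:ℝ) ≤ 1/2) := by
        rw [hx, not_le, lt_div_iff₀ hpow, h2]; nlinarith
      have ht : ((tent x : ℝ)) = ((2^(n+2) - j : ℕ) : ℝ) / 2^(n+1) := by
        rw [tent_coe, if_neg hx2, hx, Nat.cast_sub hj2]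
        push_cast
        field_simp
        ring
      have hle : 2^(n+2) - j ≤ 2^(n+1) := by
        have : 2^(n+2) = 2 * 2^(n+1) := by ring
        omega
      obtain ⟨j', h1, h2', h3⟩ := ih _ hle (tent x) ht
      refine ⟨j', h1, ?_, h3⟩
      have he : 2^(n+2) = 2 * 2^(n+1) := by ring
      omega

lemma mIter_pair_s8 (n : ℕ) (x : UI) :
    mIter tent tentc (n+1) x = {tent^[n+1] x, conj' (tent^[n+1] x)} := by
  induction n with
  | zero =>
    show tent '' {x} ∪ tentc '' {x} = ({tent^[1] x, conj' (tent^[1] x)} : Set UI)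
    rw [Set.image_singleton, Set.image_singleton, tentc_eq, Set.singleton_union,
      Function.iterate_one]
  | succ n ih =>
    show tent '' mIter tent tentc (n+1) x ∪ tentc '' mIter tent tentc (n+1) x = _
    rw [ih, Set.image_pair, Set.image_pair, tent_conj, tentc_conj, tentc_eq,
      Function.iterate_succ_apply' tent (n+1), Set.pair_eq_singleton, Set.pair_eq_singleton,
      Set.singleton_union]

/-- the multiple mapping `F = {tent, 1 - tent}` on `[0,1]` is
Hausdorff metric sensitive. -/
theorem stmt8 : MSensitive tent tentc := by
  refine ⟨1/4, by norm_num, ?_⟩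
  rintro U hU ⟨x₀, hx₀⟩
  obtain ⟨ε, hε, hball⟩ := Metric.isOpen_iff.1 hU x₀ hx₀
  obtain ⟨N₀, hN₀⟩ := exists_pow_lt_of_lt_one (show (0:ℝ) < ε/2 by linarith)
    (show (1/2:ℝ) < 1 by norm_num)
  set N := max N₀ 1 with hNdef
  have hN1 : 1 ≤ N := le_max_right _ _
  have hp : (0:ℝ) < 2^N := by positivity
  have hp1 : (0:ℝ) < 2^(N+1) := by positivity
  have hNε : (2:ℝ)/2^N < ε := by
    have h1 : ((1:ℝ)/2)^N ≤ (1/2)^N₀ :=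
      pow_le_pow_of_le_one (by norm_num) (by norm_num) (le_max_left _ _)
    have h2 : ((1:ℝ)/2)^N = 1/2^N := by rw [div_pow, one_pow]
    rw [show (2:ℝ)/2^N = 2 * (1/2^N) by ring, ← h2]
    nlinarith
  set f := Nat.floor ((x₀:ℝ) * 2^N) with hfdef
  set m := min f (2^N - 1) with hmdef
  have hx₀0 : (0:ℝ) ≤ x₀ := x₀.2.1
  have hx₀1 : (x₀:ℝ) ≤ 1 := x₀.2.2
  have hf1 : (f:ℝ) ≤ (x₀:ℝ) * 2^N := Nat.floor_le (by positivity)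
  have hf2 : (x₀:ℝ) * 2^N < f + 1 := Nat.lt_floor_add_one _
  have hpow1 : (1:ℕ) ≤ 2^N := Nat.one_le_two_pow
  have hm1 : (m:ℝ) ≤ (x₀:ℝ) * 2^N := by
    rcases le_or_gt f (2^N - 1) with h | h
    · rw [hmdef, min_eq_left h]; exact hf1
    · rw [hmdef, min_eq_right h.le]
      have hf' : 2^N ≤ f := by omega
      have h5 : ((2:ℕ)^N : ℝ) ≤ f := by exact_mod_cast hf'
      rw [Nat.cast_sub hpow1]
      push_cast at h5 ⊢
      linarith
  have hm2 : (x₀:ℝ) * 2^N ≤ (m:ℝ) + 1 := by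
    rcases le_or_gt f (2^N - 1) with h | h
    · rw [hmdef, min_eq_left h]; linarith
    · rw [hmdef, min_eq_right h.le, Nat.cast_sub hpow1]
      push_cast
      nlinarith
  have hm3 : m ≤ 2^N - 1 := min_le_right _ _
  have hj : 2*m ≤ 2^(N+1) := by
    have h : 2^(N+1) = 2 * 2^N := by ring
    omega
  have hk : 2*m+1 ≤ 2^(N+1) := by
    have h : 2^(N+1) = 2 * 2^N := by ring
    omega
  have hjr : ((2*m : ℕ) : ℝ) ≤ 2^(N+1) := by
    have := (Nat.cast_le (α := ℝ)).2 hj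
    push_cast at this ⊢
    linarith
  have hkr : ((2*m+1 : ℕ) : ℝ) ≤ 2^(N+1) := by
    have := (Nat.cast_le (α := ℝ)).2 hk
    push_cast at this ⊢
    linarith
  have hmemx : ((2*m : ℕ) : ℝ)/2^(N+1) ∈ Set.Icc (0:ℝ) 1 := by
    constructor
    · positivity
    · rw [div_le_one hp1]; exact hjr
  have hmemy : ((2*m+1 : ℕ) : ℝ)/2^(N+1) ∈ Set.Icc (0:ℝ) 1 := by
    constructor
    · positivity
    · rw [div_le_one hp1]; exact hkr
  set x : UI := ⟨((2*m : ℕ) : ℝ)/2^(N+1), hmemx⟩ with hxdef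
  set y : UI := ⟨((2*m+1 : ℕ) : ℝ)/2^(N+1), hmemy⟩ with hydef
  have hdx : dist x x₀ < ε := by
    rw [Subtype.dist_eq, Real.dist_eq]
    have e1 : (x:ℝ) - x₀ = (2*(m:ℝ) - 2*((x₀:ℝ)*2^N))/2^(N+1) := by
      show ((2*m : ℕ) : ℝ)/2^(N+1) - x₀ = _
      push_cast
      field_simp
      ring
    rw [e1, abs_div, abs_of_pos hp1]
    have habs : |2*(m:ℝ) - 2*((x₀:ℝ)*2^N)| ≤ 2 := by
      rw [abs_le]; constructor <;> linarith
    have h2 : (2:ℝ)/2^(N+1) ≤ 2/2^N := by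
      apply div_le_div_of_nonneg_left (by norm_num) hp
      rw [pow_succ]; nlinarith
    calc |2*(m:ℝ) - 2*((x₀:ℝ)*2^N)|/2^(N+1) ≤ 2/2^(N+1) :=
            div_le_div_of_nonneg_right habs hp1.le |>.trans_eq rfl
      _ ≤ 2/2^N := h2
      _ < ε := hNε
  have hdy : dist y x₀ < ε := by
    rw [Subtype.dist_eq, Real.dist_eq]
    have e1 : (y:ℝ) - x₀ = ((2*(m:ℝ)+1) - 2*((x₀:ℝ)*2^N))/2^(N+1) := by
      show ((2*m+1 : ℕ) : ℝ)/2^(N+1) - x₀ = _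
      push_cast
      field_simp
      ring
    rw [e1, abs_div, abs_of_pos hp1]
    have habs : |(2*(m:ℝ)+1) - 2*((x₀:ℝ)*2^N)| ≤ 2 := by
      rw [abs_le]; constructor <;> linarith
    have h2 : (2:ℝ)/2^(N+1) ≤ 2/2^N := by
      apply div_le_div_of_nonneg_left (by norm_num) hp
      rw [pow_succ]; nlinarith
    calc |(2*(m:ℝ)+1) - 2*((x₀:ℝ)*2^N)|/2^(N+1) ≤ 2/2^(N+1) :=
            div_le_div_of_nonneg_right habs hp1.le |>.trans_eq rfl
      _ ≤ 2/2^N := h2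
      _ < ε := hNε
  have hxU : x ∈ U := hball (Metric.mem_ball.2 hdx)
  have hyU : y ∈ U := hball (Metric.mem_ball.2 hdy)
  obtain ⟨j₁, hj₁2, hj₁p, hj₁v⟩ := key N (2*m) hj x rfl
  obtain ⟨j₂, hj₂2, hj₂p, hj₂v⟩ := key N (2*m+1) hk y rfl
  have ha : (tent^[N] x : ℝ) = 0 ∨ (tent^[N] x : ℝ) = 1 := by
    have hcase : j₁ = 0 ∨ j₁ = 2 := by omega
    rcases hcase with h | h <;> rw [hj₁v, h] <;> norm_num
  have hb : (tent^[N] y : ℝ) = 1/2 := by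
    have hcase : j₂ = 1 := by omega
    rw [hj₂v, hcase]; norm_num
  refine ⟨x, hxU, y, hyU, N, hN1, ?_⟩
  obtain ⟨M, hM⟩ : ∃ M, N = M + 1 := ⟨N - 1, by omega⟩
  have hA : mIter tent tentc N x = {tent^[N] x, conj' (tent^[N] x)} := by
    rw [hM]; exact mIter_pair_s8 M x
  have hB : mIter tent tentc N y = {tent^[N] y} := by
    have hc : conj' (tent^[N] y) = tent^[N] y := by
      apply Subtype.ext; rw [conj'_coe, hb]; norm_num
    rw [hM, mIter_pair_s8 M y, ← hM, hc, Set.pair_eq_singleton]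
  have hane : EMetric.hausdorffEdist (mIter tent tentc N x) (mIter tent tentc N y) ≠ ⊤ :=
    Metric.hausdorffEdist_ne_top_of_nonempty_of_bounded (mIter_nonempty _ _ _ _)
      (mIter_nonempty _ _ _ _) (mIter_finite _ _ _ _).isBounded (mIter_finite _ _ _ _).isBounded
  have haA : tent^[N] x ∈ mIter tent tentc N x := by rw [hA]; exact Set.mem_insert _ _
  have hdab : dist (tent^[N] x) (tent^[N] y) = 1/2 := by
    rw [Subtype.dist_eq, Real.dist_eq, hb]
    rcases ha with h | h <;> rw [h] <;> norm_num
  have hinf : Metric.infDist (tent^[N] x) (mIter tent tentc N y) = 1/2 := by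
    rw [hB, Metric.infDist_singleton, hdab]
  have hle : Metric.infDist (tent^[N] x) (mIter tent tentc N y) ≤
      Metric.hausdorffDist (mIter tent tentc N x) (mIter tent tentc N y) :=
    Metric.infDist_le_hausdorffDist_of_mem haA hane
  have heq : dist (mIterNC tent tentc N x) (mIterNC tent tentc N y)
      = Metric.hausdorffDist (mIter tent tentc N x) (mIter tent tentc N y) :=
    Metric.NonemptyCompacts.dist_eq
  rw [heq]
  linarith
end

section
/- Let X = {0} ∪ {1/n : n ∈ ℤ, n ≥ 1} ⊆ ℝ with the Euclidean metric, and define continuous maps f1, f2 : X → X by: f1(1) = 1/2, f1(1/2) = 1/3, f1(1/3) = 1, f1(1/n) = 1/(n+1) for n ≥ 4, f1(0) = 0; and f2(1) = 1/4, f2(1/4) = 1/5, f2(1/5) = 1, f2(1/3) = 1/6, f2(1/n) = 1/(n+1) for n ∈ {2} ∪ {6, 7, 8, …}, f2(0) = 0. Then 1 is a periodic point of both f1 and f2 (of period 3 for each), but 1 is NOT a periodic point of the multiple mapping F = {f1, f2}: the deleted orbit {F^n(1) : n ≥ 1} is infinite. -/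
open TopologicalSpace

/-- The space `{0} ∪ {1/n : n ≥ 1} ⊆ ℝ` (note `1/0 = 0` in `ℝ`, so this is
`{1/n : n ∈ ℕ}`). -/
abbrev InvNat : Type := {x : ℝ | ∃ n : ℕ, x = 1 / n}

/-- The point `1/n` of the space (`1/0 = 0`). -/
noncomputable def ipt (n : ℕ) : InvNat := ⟨1 / n, n, rfl⟩

lemma ipt_inj : Function.Injective ipt := by
  intro n m h
  have h' : (1:ℝ)/n = 1/m := congrArg Subtype.val h
  rcases Nat.eq_zero_or_pos n with hn | hn
  · subst hn
    simp only [Nat.cast_zero, div_zero, eq_comm, one_div, inv_eq_zero, Nat.cast_eq_zero] at h'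
    omega
  · rcases Nat.eq_zero_or_pos m with hm | hm
    · subst hm
      simp only [Nat.cast_zero, div_zero, one_div, inv_eq_zero, Nat.cast_eq_zero] at h'
      omega
    · have hn' : (n:ℝ) ≠ 0 := Nat.cast_ne_zero.mpr hn.ne'
      have hm' : (m:ℝ) ≠ 0 := Nat.cast_ne_zero.mpr hm.ne'
      field_simp at h'
      exact_mod_cast h'.symm

/-- on `X = {0} ∪ {1/n : n ≥ 1}`, with `f₁ : 1 → 1/2 → 1/3 → 1`,
`f₁(1/n) = 1/(n+1)` for `n ≥ 4`, and `f₂ : 1 → 1/4 → 1/5 → 1`, `f₂(1/3) = 1/6`,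
`f₂(1/n) = 1/(n+1)` for `n ∈ {2} ∪ {6,7,8,…}` (both fixing `0`), the point `1` is a
periodic point of period `3` of both `f₁` and `f₂`, but `1` is not a periodic point of
`F = {f₁, f₂}`: the deleted orbit `{F^n(1) : n ≥ 1}` is infinite. -/
theorem stmt12 (f₁ f₂ : InvNat → InvNat)
    (hf₁ : Continuous f₁) (hf₂ : Continuous f₂)
    (h1a : f₁ (ipt 1) = ipt 2) (h1b : f₁ (ipt 2) = ipt 3) (h1c : f₁ (ipt 3) = ipt 1)
    (h1d : ∀ n : ℕ, 4 ≤ n → f₁ (ipt n) = ipt (n + 1)) (h1e : f₁ (ipt 0) = ipt 0)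
    (h2a : f₂ (ipt 1) = ipt 4) (h2b : f₂ (ipt 4) = ipt 5) (h2c : f₂ (ipt 5) = ipt 1)
    (h2d : f₂ (ipt 3) = ipt 6) (h2e : f₂ (ipt 2) = ipt 3)
    (h2f : ∀ n : ℕ, 6 ≤ n → f₂ (ipt n) = ipt (n + 1)) (h2g : f₂ (ipt 0) = ipt 0) :
    (f₁^[3] (ipt 1) = ipt 1 ∧ ∀ k, 1 ≤ k → k < 3 → f₁^[k] (ipt 1) ≠ ipt 1) ∧
    (f₂^[3] (ipt 1) = ipt 1 ∧ ∀ k, 1 ≤ k → k < 3 → f₂^[k] (ipt 1) ≠ ipt 1) ∧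
    ¬ MPeriodicPt f₁ f₂ (ipt 1) ∧
    (deletedOrbit f₁ f₂ (ipt 1)).Infinite := by
  have inj := @ipt_inj
  -- part 1: f₁ periodicity
  have p1 : f₁^[3] (ipt 1) = ipt 1 := by
    simp [Function.iterate_succ_apply, h1a, h1b, h1c]
  have p1' : ∀ k, 1 ≤ k → k < 3 → f₁^[k] (ipt 1) ≠ ipt 1 := by
    intro k hk1 hk3 h
    interval_cases k
    · simp [h1a] at h; exact absurd (inj h) (by norm_num)
    · simp [Function.iterate_succ_apply, h1a, h1b] at h
      exact absurd (inj h) (by norm_num)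
  have p2 : f₂^[3] (ipt 1) = ipt 1 := by
    simp [Function.iterate_succ_apply, h2a, h2b, h2c]
  have p2' : ∀ k, 1 ≤ k → k < 3 → f₂^[k] (ipt 1) ≠ ipt 1 := by
    intro k hk1 hk3 h
    interval_cases k
    · simp [h2a] at h; exact absurd (inj h) (by norm_num)
    · simp [Function.iterate_succ_apply, h2a, h2b] at h
      exact absurd (inj h) (by norm_num)
  -- upper bound invariant
  have ub : ∀ n, ∀ y ∈ mIter f₁ f₂ n (ipt 1),
      ∃ m, y = ipt m ∧ 1 ≤ m ∧ m ≤ n + 3 ∧ (m = 2 → 1 ≤ n) ∧ (m = 3 → 2 ≤ n) := by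
    intro n
    induction n with
    | zero =>
      intro y hy
      rw [show mIter f₁ f₂ 0 (ipt 1) = {ipt 1} from rfl] at hy
      exact ⟨1, hy, by omega, by omega, by omega, by omega⟩
    | succ n ih =>
      intro y hy
      rw [show mIter f₁ f₂ (n+1) (ipt 1)
          = f₁ '' mIter f₁ f₂ n (ipt 1) ∪ f₂ '' mIter f₁ f₂ n (ipt 1) from rfl] at hy
      rcases hy with ⟨z, hz, rfl⟩ | ⟨z, hz, rfl⟩
      · obtain ⟨m, rfl, hm1, hm2, hm3, hm4⟩ := ih z hz
        match m, hm1 with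
        | 1, _ => exact ⟨2, by rw [h1a], by omega, by omega, by omega, by omega⟩
        | 2, _ => exact ⟨3, by rw [h1b], by omega, by omega, by omega,
            fun _ => by omega⟩
        | 3, _ => exact ⟨1, by rw [h1c], by omega, by omega, by omega, by omega⟩
        | (k+4), _ => exact ⟨k+5, by rw [h1d (k+4) (by omega)], by omega, by omega,
            by omega, by omega⟩
      · obtain ⟨m, rfl, hm1, hm2, hm3, hm4⟩ := ih z hz
        match m, hm1 with
        | 1, _ => exact ⟨4, by rw [h2a], by omega, by omega, by omega, by omega⟩
        | 2, _ => exact ⟨3, by rw [h2e], by omega, by omega, by omega,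
            fun _ => by omega⟩
        | 3, _ => exact ⟨6, by rw [h2d], by omega,
            by have := hm4 rfl; omega, by omega, by omega⟩
        | 4, _ => exact ⟨5, by rw [h2b], by omega, by omega, by omega, by omega⟩
        | 5, _ => exact ⟨1, by rw [h2c], by omega, by omega, by omega, by omega⟩
        | (k+6), _ => exact ⟨k+7, by rw [h2f (k+6) (by omega)], by omega, by omega,
            by omega, by omega⟩
  -- lower chain: ipt (n+3) ∈ mIter n for n ≥ 3
  have m1 : ipt 2 ∈ mIter f₁ f₂ 1 (ipt 1) := Or.inl ⟨ipt 1, rfl, h1a⟩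
  have m2 : ipt 3 ∈ mIter f₁ f₂ 2 (ipt 1) := Or.inr ⟨ipt 2, m1, h2e⟩
  have m3 : ipt 6 ∈ mIter f₁ f₂ 3 (ipt 1) := Or.inr ⟨ipt 3, m2, h2d⟩
  have chain : ∀ k : ℕ, ipt (k + 6) ∈ mIter f₁ f₂ (k + 3) (ipt 1) := by
    intro k
    induction k with
    | zero => exact m3
    | succ k ih =>
      refine Or.inr ⟨ipt (k + 6), ih, ?_⟩
      rw [h2f (k+6) (by omega)]
  -- the orbit sets for n ≥ 3 are pairwise distinct
  have distinct : ∀ k l : ℕ, mIter f₁ f₂ (k+3) (ipt 1) = mIter f₁ f₂ (l+3) (ipt 1) →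
      k = l := by
    intro k l h
    by_contra hne
    wlog hkl : k < l generalizing k l
    · exact this l k h.symm (Ne.symm hne) (by omega)
    have hmem : ipt (l + 6) ∈ mIter f₁ f₂ (k+3) (ipt 1) := h ▸ chain l
    obtain ⟨m, hm, _, hm2, _, _⟩ := ub (k+3) _ hmem
    have := inj hm
    omega
  have orbInf : (deletedOrbit f₁ f₂ (ipt 1)).Infinite := by
    exact Set.infinite_of_injective_forall_mem
      (f := fun k : ℕ => mIter f₁ f₂ (k+3) (ipt 1))
      (fun k l h => distinct k l h) (fun k => ⟨k+3, by omega, rfl⟩)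
  exact ⟨⟨p1, p1'⟩, ⟨p2, p2'⟩, fun h => orbInf h.1, orbInf⟩
end

section
/- On X = [0,1], let f1(x) = min(2x, 1), f2(x) = min(2 − 2x, 1), and let f be the tent map (f(x) = 2x for 0 ≤ x ≤ 1/2, f(x) = 2 − 2x for 1/2 < x ≤ 1). Then for every x ∈ [0,1] and every n ≥ 2, the multiple mapping F = {f1, f2} satisfies F^n(x) = {0, 1, f^n(x)}. -/
open TopologicalSpace

private lemma key_dichotomy (y : UI) :
    (mmap₁ y = tent y ∧ mmap₂ y = ⟨1, by norm_num⟩) ∨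
    (mmap₁ y = ⟨1, by norm_num⟩ ∧ mmap₂ y = tent y) := by
  by_cases h : (y : ℝ) ≤ 1 / 2
  · left
    have h1 : (2 : ℝ) * y ≤ 1 := by linarith
    have h2 : (1 : ℝ) ≤ 2 - 2 * y := by linarith
    exact ⟨Subtype.ext (by simp [mmap₁, tent, min_eq_left h1]; intro hh; linarith),
           Subtype.ext (by simp [mmap₂, min_eq_right h2])⟩
  · right
    have h1 : (1 : ℝ) ≤ 2 * y := by push_neg at h; linarith
    have h2 : (2 : ℝ) - 2 * y ≤ 1 := by push_neg at h; linarith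
    exact ⟨Subtype.ext (by simp [mmap₁, min_eq_right h1]),
           Subtype.ext (by simp [mmap₂, tent, min_eq_left h2]; intro hh; push_neg at h; linarith)⟩

private lemma m1z : mmap₁ ⟨0, by norm_num⟩ = ⟨0, by norm_num⟩ :=
  Subtype.ext (by norm_num [mmap₁])

private lemma m2z : mmap₂ ⟨0, by norm_num⟩ = ⟨1, by norm_num⟩ :=
  Subtype.ext (by norm_num [mmap₂])

private lemma m1o : mmap₁ ⟨1, by norm_num⟩ = ⟨1, by norm_num⟩ :=
  Subtype.ext (by norm_num [mmap₁])

private lemma m2o : mmap₂ ⟨1, by norm_num⟩ = ⟨0, by norm_num⟩ :=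
  Subtype.ext (by norm_num [mmap₂])

private lemma mIter_one (x : UI) :
    mIter mmap₁ mmap₂ 1 x = ({tent x, ⟨1, by norm_num⟩} : Set UI) := by
  rcases key_dichotomy x with ⟨h1, h2⟩ | ⟨h1, h2⟩ <;>
    simp [mIter, Set.image_singleton, h1, h2, Set.singleton_union, Set.pair_comm]

/-- for `f₁ x = min (2x) 1`, `f₂ x = min (2-2x) 1` and the tent map `f`
on `[0,1]`, `F^n(x) = {0, 1, f^n(x)}` for every `x ∈ [0,1]` and every `n ≥ 2`. -/
theorem stmt14 (x : UI) (n : ℕ) (hn : 2 ≤ n) :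
    mIter mmap₁ mmap₂ n x =
      ({⟨0, by norm_num⟩, ⟨1, by norm_num⟩, tent^[n] x} : Set UI) := by
  induction n, hn using Nat.le_induction with
  | base =>
    have h2 : mIter mmap₁ mmap₂ 2 x =
        mmap₁ '' mIter mmap₁ mmap₂ 1 x ∪ mmap₂ '' mIter mmap₁ mmap₂ 1 x := rfl
    have ht : tent^[2] x = tent (tent x) := by
      simp [Function.iterate_succ_apply']
    rw [h2, mIter_one, ht]
    rcases key_dichotomy (tent x) with ⟨h1, hh2⟩ | ⟨h1, hh2⟩ <;>
      · simp only [Set.image_insert_eq, Set.image_singleton, h1, hh2, m1o, m2o]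
        ext w
        simp only [Set.mem_union, Set.mem_insert_iff, Set.mem_singleton_iff]
        tauto
  | succ n hn ih =>
    have h2 : mIter mmap₁ mmap₂ (n + 1) x =
        mmap₁ '' mIter mmap₁ mmap₂ n x ∪ mmap₂ '' mIter mmap₁ mmap₂ n x := rfl
    have ht : tent^[n + 1] x = tent (tent^[n] x) := Function.iterate_succ_apply' tent n x
    rw [h2, ih, ht]
    rcases key_dichotomy (tent^[n] x) with ⟨h1, hh2⟩ | ⟨h1, hh2⟩ <;>
      · simp only [Set.image_insert_eq, Set.image_singleton, h1, hh2, m1z, m2z, m1o, m2o]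
        ext w
        simp only [Set.mem_union, Set.mem_insert_iff, Set.mem_singleton_iff]
        tauto
end

section
/- On X = [0,1], let f1(x) = min(2x, 1) and f2(x) = min(2 − 2x, 1). Then the multiple mapping F = {f1, f2} is Hausdorff metric sensitive: there exists δ > 0 such that every nonempty open set U ⊆ [0,1] contains points x, y with d_H(F^n(x), F^n(y)) > δ for some n ≥ 1. -/
open TopologicalSpace

namespace Stmt15Aux

noncomputable def z : UI := ⟨0, le_refl 0, zero_le_one⟩
noncomputable def o : UI := ⟨1, zero_le_one, le_refl 1⟩

lemma coe_tent (x : UI) :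
    ((tent x : UI) : ℝ) = if (x : ℝ) ≤ 1 / 2 then 2 * (x:ℝ) else 2 - 2 * (x:ℝ) := rfl

lemma mmap₁_eq (t : UI) : mmap₁ t = tent t ∨ mmap₁ t = o := by
  by_cases h : (t : ℝ) ≤ 1 / 2
  · left; apply Subtype.ext
    show min (2 * (t:ℝ)) 1 = _
    rw [coe_tent, if_pos h, min_eq_left (by linarith)]
  · right; apply Subtype.ext
    show min (2 * (t:ℝ)) 1 = 1
    rw [min_eq_right (by push_neg at h; linarith)]

lemma mmap₂_eq (t : UI) : mmap₂ t = tent t ∨ mmap₂ t = o := by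
  by_cases h : (t : ℝ) ≤ 1 / 2
  · right; apply Subtype.ext
    show min (2 - 2 * (t:ℝ)) 1 = 1
    rw [min_eq_right (by linarith)]
  · left; apply Subtype.ext
    show min (2 - 2 * (t:ℝ)) 1 = _
    have ht := t.2.2
    rw [coe_tent, if_neg h, min_eq_left (by push_neg at h; linarith)]

lemma tent_eq_mmap (t : UI) : tent t = mmap₁ t ∨ tent t = mmap₂ t := by
  by_cases h : (t : ℝ) ≤ 1 / 2
  · left; apply Subtype.ext
    show _ = min (2 * (t:ℝ)) 1
    rw [coe_tent, if_pos h, min_eq_left (by linarith)]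
  · right; apply Subtype.ext
    show _ = min (2 - 2 * (t:ℝ)) 1
    have ht := t.2.2
    rw [coe_tent, if_neg h, min_eq_left (by push_neg at h; linarith)]

lemma mmap₁_z : mmap₁ z = z := by
  apply Subtype.ext; show min (2 * (0:ℝ)) 1 = 0; norm_num
lemma mmap₂_z : mmap₂ z = o := by
  apply Subtype.ext; show min (2 - 2 * (0:ℝ)) 1 = 1; norm_num
lemma mmap₁_o : mmap₁ o = o := by
  apply Subtype.ext; show min (2 * (1:ℝ)) 1 = 1; norm_num
lemma mmap₂_o : mmap₂ o = z := by
  apply Subtype.ext; show min (2 - 2 * (1:ℝ)) 1 = 0; norm_num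

lemma tent_z : tent z = z := by
  apply Subtype.ext; rw [coe_tent]; show (if (0:ℝ) ≤ 1/2 then 2 * (0:ℝ) else 2 - 2 * 0) = 0
  norm_num
lemma tent_o : tent o = z := by
  apply Subtype.ext; rw [coe_tent]; show (if (1:ℝ) ≤ 1/2 then 2 * (1:ℝ) else 2 - 2 * 1) = 0
  norm_num

lemma tent_mem_mIter (n : ℕ) (x : UI) : tent^[n] x ∈ mIter mmap₁ mmap₂ n x := by
  induction n with
  | zero => exact rfl
  | succ n ih =>
    rw [Function.iterate_succ_apply']
    rcases tent_eq_mmap (tent^[n] x) with h | h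
    · exact Or.inl ⟨_, ih, h.symm⟩
    · exact Or.inr ⟨_, ih, h.symm⟩

lemma mIter_subset (n : ℕ) (x : UI) :
    mIter mmap₁ mmap₂ n x ⊆ {tent^[n] x, z, o} := by
  induction n with
  | zero => intro u hu; exact Or.inl hu
  | succ n ih =>
    rintro u (⟨v, hv, rfl⟩ | ⟨v, hv, rfl⟩) <;>
      rcases ih hv with rfl | rfl | rfl
    · rw [Function.iterate_succ_apply']
      rcases mmap₁_eq (tent^[n] x) with h | h
      · exact Or.inl h
      · exact Or.inr (Or.inr (h ▸ rfl))
    · rw [mmap₁_z]; exact Or.inr (Or.inl rfl)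
    · rw [mmap₁_o]; exact Or.inr (Or.inr rfl)
    · rw [Function.iterate_succ_apply']
      rcases mmap₂_eq (tent^[n] x) with h | h
      · exact Or.inl h
      · exact Or.inr (Or.inr (h ▸ rfl))
    · rw [mmap₂_z]; exact Or.inr (Or.inr rfl)
    · rw [mmap₂_o]; exact Or.inr (Or.inl rfl)

lemma tentB : ∀ n : ℕ, ∀ k : ℕ, k ≤ 2 ^ n → ∀ x : UI, (x : ℝ) = k / 2 ^ n →
    ((tent^[n] x : UI) : ℝ) = 0 ∨ ((tent^[n] x : UI) : ℝ) = 1 := by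
  intro n
  induction n with
  | zero =>
    intro k hk x hx
    interval_cases k
    · left; simpa using hx
    · right; simpa using hx
  | succ n ih =>
    intro k hk x hx
    have h2n : (0:ℝ) < 2 ^ n := by positivity
    have hks : (k:ℝ) ≤ 2 ^ (n+1) := by exact_mod_cast hk
    rw [Function.iterate_succ_apply]
    by_cases hkn : k ≤ 2 ^ n
    · have hk' : (k:ℝ) ≤ 2 ^ n := by exact_mod_cast hkn
      have hx2 : (x:ℝ) ≤ 1/2 := by
        rw [hx, pow_succ, div_le_iff₀ (by positivity)]; nlinarith
      refine ih k hkn (tent x) ?_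
      rw [coe_tent, if_pos hx2, hx, pow_succ]
      field_simp
    · push_neg at hkn
      have hk' : (2:ℝ) ^ n < k := by exact_mod_cast hkn
      have hx2 : ¬ (x:ℝ) ≤ 1/2 := by
        rw [hx, pow_succ]; push_neg
        rw [lt_div_iff₀ (by positivity)]; nlinarith
      refine ih (2 ^ (n+1) - k) (by omega) (tent x) ?_
      have hcast : ((2 ^ (n+1) - k : ℕ) : ℝ) = 2 ^ (n+1) - k := by
        push_cast [Nat.cast_sub hk]; ring
      rw [coe_tent, if_neg hx2, hx, hcast, pow_succ]
      field_simp

lemma tentC : ∀ n : ℕ, ∀ k : ℕ, 2 * k + 1 ≤ 2 ^ (n+1) → ∀ x : UI,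
    (x : ℝ) = (2 * k + 1) / 2 ^ (n+1) → ((tent^[n] x : UI) : ℝ) = 1/2 := by
  intro n
  induction n with
  | zero =>
    intro k hk x hx
    have : k = 0 := by omega
    subst this
    rw [Function.iterate_zero_apply, hx]; norm_num
  | succ n ih =>
    intro k hk x hx
    have h2n : (0:ℝ) < 2 ^ (n+1) := by positivity
    have hks : ((2 * k + 1 : ℕ):ℝ) ≤ 2 ^ (n+2) := by exact_mod_cast hk
    push_cast at hks
    rw [Function.iterate_succ_apply]
    by_cases hkn : 2 * k + 1 ≤ 2 ^ (n+1)
    · have hk' : (2 * (k:ℝ) + 1) ≤ 2 ^ (n+1) := by exact_mod_cast hkn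
      have hx2 : (x:ℝ) ≤ 1/2 := by
        rw [hx, pow_succ _ (n+1), div_le_iff₀ (by positivity)]; push_cast; nlinarith
      refine ih k hkn (tent x) ?_
      rw [coe_tent, if_pos hx2, hx, pow_succ _ (n+1)]
      push_cast
      field_simp
    · push_neg at hkn
      have hk' : (2:ℝ) ^ (n+1) < 2 * k + 1 := by exact_mod_cast hkn
      have hx2 : ¬ (x:ℝ) ≤ 1/2 := by
        rw [hx, pow_succ _ (n+1)]; push_neg
        rw [lt_div_iff₀ (by positivity)]; push_cast; nlinarith
      have hkle : k + 1 ≤ 2 ^ (n+1) := by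
        have h1 : 2 ^ (n+2) = 2 * 2 ^ (n+1) := by ring
        omega
      refine ih (2 ^ (n+1) - (k+1)) (by
        have h1 : 2 ^ (n+2) = 2 * 2 ^ (n+1) := by ring
        omega) (tent x) ?_
      have hcast : ((2 ^ (n+1) - (k+1) : ℕ) : ℝ) = 2 ^ (n+1) - ((k:ℝ)+1) := by
        push_cast [Nat.cast_sub hkle]; ring
      rw [coe_tent, if_neg hx2, hx, hcast, pow_succ _ (n+1)]
      push_cast
      field_simp; ring

end Stmt15Aux

namespace Stmt15Aux

lemma key (N : ℕ) (x y : UI)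
    (hx : ((tent^[N] x : UI) : ℝ) = 1/2)
    (hy : ((tent^[N] y : UI) : ℝ) = 0 ∨ ((tent^[N] y : UI) : ℝ) = 1) :
    1/4 < dist (mIterNC mmap₁ mmap₂ N x) (mIterNC mmap₁ mmap₂ N y) := by
  by_contra hcon
  push_neg at hcon
  have hfin : EMetric.hausdorffEdist (mIter mmap₁ mmap₂ N x) (mIter mmap₁ mmap₂ N y) ≠ ⊤ :=
    Metric.hausdorffEdist_ne_top_of_nonempty_of_bounded (mIter_nonempty _ _ _ _)
      (mIter_nonempty _ _ _ _) ((mIter_finite _ _ _ _).isBounded)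
      ((mIter_finite _ _ _ _).isBounded)
  have hde : dist (mIterNC mmap₁ mmap₂ N x) (mIterNC mmap₁ mmap₂ N y)
      = Metric.hausdorffDist (mIter mmap₁ mmap₂ N x) (mIter mmap₁ mmap₂ N y) := rfl
  have hlt : Metric.hausdorffDist (mIter mmap₁ mmap₂ N x) (mIter mmap₁ mmap₂ N y)
      < 1/2 := by rw [← hde]; linarith
  obtain ⟨b, hb, hdb⟩ :=
    Metric.exists_dist_lt_of_hausdorffDist_lt (tent_mem_mIter N x) hlt hfin
  have hbv : (b : ℝ) = 0 ∨ (b : ℝ) = 1 := by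
    rcases mIter_subset N y hb with rfl | rfl | rfl
    · exact hy
    · left; rfl
    · right; rfl
  rw [Subtype.dist_eq, Real.dist_eq, hx, abs_sub_lt_iff] at hdb
  rcases hbv with h | h <;> rw [h] at hdb <;> norm_num at hdb

end Stmt15Aux

open Stmt15Aux

/-- the multiple mapping `F = {x ↦ min (2x) 1, x ↦ min (2-2x) 1}` on
`[0,1]` is Hausdorff metric sensitive. -/
theorem stmt15 : MSensitive mmap₁ mmap₂ := by
  refine ⟨1/4, by norm_num, ?_⟩
  rintro U hU ⟨x0, hx0⟩
  obtain ⟨ε, hε, hball⟩ := Metric.isOpen_iff.1 hU x0 hx0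
  set ε' : ℝ := min (ε/2) (1/2) with hε'def
  have hε'0 : 0 < ε' := lt_min (by linarith) (by norm_num)
  have hε'le : ε' ≤ 1/2 := min_le_right _ _
  have hε'ε : ε' < ε := lt_of_le_of_lt (min_le_left _ _) (by linarith)
  set c : ℝ := min (x0:ℝ) (1 - ε') with hcdef
  have hc0 : 0 ≤ c := le_min x0.2.1 (by linarith)
  have hc1 : c + ε' ≤ 1 := by
    have := min_le_right (x0:ℝ) (1 - ε'); linarith
  have hcx0 : c ≤ x0 := min_le_left _ _
  have hx0c : (x0:ℝ) ≤ c + ε' := by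
    rcases le_total (x0:ℝ) (1 - ε') with h | h
    · rw [hcdef, min_eq_left h]; linarith
    · rw [hcdef, min_eq_right h]; linarith [x0.2.2]
  obtain ⟨m0, hm0⟩ := pow_unbounded_of_one_lt (R := ℝ) (2/ε') (by norm_num : (1:ℝ) < 2)
  set N : ℕ := m0 + 1 with hNdef
  have h2m : (0:ℝ) < 2 ^ (N+1) := by positivity
  have h2N : (0:ℝ) < 2 ^ N := by positivity
  have hm : 2/ε' < 2 ^ (N+1) := by
    refine hm0.trans_le ?_
    exact pow_le_pow_right₀ one_le_two (by omega)
  have h2small : 2 < ε' * 2 ^ (N+1) := by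
    rw [div_lt_iff₀ hε'0] at hm; linarith
  set k : ℕ := ⌈c * 2 ^ (N+1)⌉₊ with hkdef
  have hk1 : c * 2 ^ (N+1) ≤ k := Nat.le_ceil _
  have hk2 : (k:ℝ) < c * 2 ^ (N+1) + 1 := Nat.ceil_lt_add_one (by positivity)
  have hp0l : c ≤ (k:ℝ) / 2 ^ (N+1) := by rw [le_div_iff₀ h2m]; exact hk1
  have hp1u : ((k:ℝ) + 1) / 2 ^ (N+1) < c + ε' := by
    rw [div_lt_iff₀ h2m]; nlinarith
  have hp0u : (k:ℝ) / 2 ^ (N+1) < c + ε' := by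
    refine lt_of_le_of_lt ?_ hp1u
    gcongr
    linarith
  have hk3r : (k:ℝ) + 1 < 2 ^ (N+1) := by
    have h1 := hp1u
    rw [div_lt_iff₀ h2m] at h1
    nlinarith
  have hk3 : k + 1 < 2 ^ (N+1) := by exact_mod_cast hk3r
  have h2pow : (2:ℕ) ^ (N+1) = 2 * 2 ^ N := by ring
  -- both dyadic points lie in U
  have hmemU : ∀ p : UI, c ≤ (p:ℝ) → (p:ℝ) < c + ε' → p ∈ U := by
    intro p h1 h2
    apply hball
    rw [Metric.mem_ball, Subtype.dist_eq, Real.dist_eq, abs_sub_lt_iff]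
    constructor <;> linarith
  rcases Nat.even_or_odd k with ⟨j, hj⟩ | ⟨j, hj⟩
  · -- k = j + j even; x = (k+1)/2^(N+1), y = k/2^(N+1) = j/2^N
    set x : UI := ⟨((k:ℝ)+1)/2^(N+1), by positivity, by linarith [hp1u, hc1]⟩ with hxdef
    set y : UI := ⟨(k:ℝ)/2^(N+1), by positivity, by linarith [hp0u, hc1]⟩ with hydef
    have hxU : x ∈ U := hmemU x (le_trans hp0l (by
      show (k:ℝ)/2^(N+1) ≤ ((k:ℝ)+1)/2^(N+1)
      rw [div_le_div_iff₀ h2m h2m]; nlinarith)) hp1u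
    have hyU : y ∈ U := hmemU y hp0l hp0u
    have hxv : ((tent^[N] x : UI) : ℝ) = 1/2 := by
      refine tentC N j (by omega) x ?_
      show ((k:ℝ)+1)/2^(N+1) = _
      have : (k:ℝ) = 2*j := by exact_mod_cast hj ▸ (by push_cast; ring : ((j+j:ℕ):ℝ) = 2*(j:ℝ))
      rw [this]
    have hyv : ((tent^[N] y : UI) : ℝ) = 0 ∨ ((tent^[N] y : UI) : ℝ) = 1 := by
      refine tentB N j (by omega) y ?_
      show (k:ℝ)/2^(N+1) = _
      have hkr : (k:ℝ) = 2*j := by exact_mod_cast hj ▸ (by push_cast; ring : ((j+j:ℕ):ℝ) = 2*(j:ℝ))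
      rw [hkr, pow_succ]
      field_simp
    exact ⟨x, hxU, y, hyU, N, by omega, key N x y hxv hyv⟩
  · -- k = 2j+1 odd; x = k/2^(N+1), y = (k+1)/2^(N+1) = (j+1)/2^N
    set x : UI := ⟨(k:ℝ)/2^(N+1), by positivity, by linarith [hp0u, hc1]⟩ with hxdef
    set y : UI := ⟨((k:ℝ)+1)/2^(N+1), by positivity, by linarith [hp1u, hc1]⟩ with hydef
    have hxU : x ∈ U := hmemU x hp0l hp0u
    have hyU : y ∈ U := hmemU y (le_trans hp0l (by
      show (k:ℝ)/2^(N+1) ≤ ((k:ℝ)+1)/2^(N+1)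
      rw [div_le_div_iff₀ h2m h2m]; nlinarith)) hp1u
    have hkr : (k:ℝ) = 2*j+1 := by exact_mod_cast hj ▸ (by push_cast; ring : ((2*j+1:ℕ):ℝ) = 2*(j:ℝ)+1)
    have hxv : ((tent^[N] x : UI) : ℝ) = 1/2 := by
      refine tentC N j (by omega) x ?_
      show (k:ℝ)/2^(N+1) = _
      rw [hkr]
    have hyv : ((tent^[N] y : UI) : ℝ) = 0 ∨ ((tent^[N] y : UI) : ℝ) = 1 := by
      refine tentB N (j+1) (by omega) y ?_
      show ((k:ℝ)+1)/2^(N+1) = _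
      rw [hkr, pow_succ]
      field_simp; push_cast; ring
    exact ⟨x, hxU, y, hyU, N, by omega, key N x y hxv hyv⟩
end

section
/- Let X be the circle ℝ/ℤ with its quotient (arc-length) metric, and let f1, f2 : X → X be the continuous maps induced by x ↦ 2x and x ↦ 3x respectively. Then the multiple mapping F = {f1, f2} is Hausdorff metric sensitive: there exists δ > 0 such that every nonempty open set U ⊆ X contains points x, y with d_H(F^n(x), F^n(y)) > δ for some n ≥ 1. -/
open TopologicalSpace

/-! ### Auxiliary material for the proof of `stmt17`. -/

namespace Stmt17Aux

/-- Greedy binary construction: `mrev k` is an odd number `≤ 2^k` with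
`mrev (k+1) ≡ 3 * mrev k [MOD 2^(k+1)]`. -/
def mrev : ℕ → ℕ
  | 0 => 1
  | k + 1 => 3 * mrev k % 2 ^ (k + 1)

lemma mrev_odd : ∀ k, mrev k % 2 = 1 := by
  intro k
  induction k with
  | zero => rfl
  | succ k ih =>
    show 3 * mrev k % 2 ^ (k + 1) % 2 = 1
    rw [Nat.mod_mod_of_dvd _ (dvd_pow_self 2 (Nat.succ_ne_zero k)), Nat.mul_mod, ih]

lemma mrev_pos (k : ℕ) : 0 < mrev k := by
  have := mrev_odd k; omega

lemma mrev_le : ∀ k, mrev k ≤ 2 ^ k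
  | 0 => le_refl 1
  | k + 1 => le_of_lt (Nat.mod_lt _ (by positivity))

lemma mrev_cong (k d : ℕ) : mrev (k + d) ≡ 3 ^ d * mrev k [MOD 2 ^ (k + 1)] := by
  induction d with
  | zero => simpa using Nat.ModEq.refl (mrev k)
  | succ d ih =>
    have h1 : mrev (k + d + 1) ≡ 3 * mrev (k + d) [MOD 2 ^ (k + d + 1)] :=
      Nat.mod_modEq _ _
    have h2 : mrev (k + d + 1) ≡ 3 * mrev (k + d) [MOD 2 ^ (k + 1)] :=
      h1.of_dvd (pow_dvd_pow 2 (by omega))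
    have h3 : 3 * mrev (k + d) ≡ 3 * (3 ^ d * mrev k) [MOD 2 ^ (k + 1)] := ih.mul_left 3
    have h4 : (3 : ℕ) * (3 ^ d * mrev k) = 3 ^ (d + 1) * mrev k := by ring
    rw [show k + (d + 1) = k + d + 1 from rfl]
    exact (h2.trans h3).trans (by rw [h4])

lemma three_pow_two_pow_nat (k : ℕ) :
    ∃ m : ℕ, m % 2 = 1 ∧ 3 ^ 2 ^ (k + 1) = 1 + 2 ^ (k + 3) * m := by
  induction k with
  | zero => exact ⟨1, rfl, by norm_num⟩
  | succ k ih =>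
    obtain ⟨m, hm, h⟩ := ih
    refine ⟨m + 2 ^ (k + 2) * m ^ 2, ?_, ?_⟩
    · have h2 : 2 ^ (k + 2) * m ^ 2 = 2 * (2 ^ (k + 1) * m ^ 2) := by ring
      have h3 : (2 * (2 ^ (k + 1) * m ^ 2)) % 2 = 0 := Nat.mul_mod_right _ _
      omega
    · have h4 : (3 : ℕ) ^ 2 ^ (k + 2) = (3 ^ 2 ^ (k + 1)) ^ 2 := by
        rw [← pow_mul]; ring_nf
      rw [h4, h]; ring

lemma three_pow_two_pow (k : ℕ) :
    ∃ m : ℤ, Odd m ∧ (3 : ℤ) ^ 2 ^ (k + 1) = 1 + 2 ^ (k + 3) * m := by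
  obtain ⟨m, hm, h⟩ := three_pow_two_pow_nat k
  refine ⟨(m : ℤ), Int.odd_iff.2 (by omega), ?_⟩
  exact_mod_cast congrArg (Nat.cast : ℕ → ℤ) h

lemma exists_pow_three_mul (j w : ℤ) (hj : Odd j) (h8 : j ≡ w [ZMOD 8]) :
    ∀ σ : ℕ, ∃ n : ℕ, (3 : ℤ) ^ n * j ≡ w [ZMOD 2 ^ (σ + 3)] := by
  intro σ
  induction σ with
  | zero => exact ⟨0, by simpa using h8⟩
  | succ σ ih =>
    obtain ⟨n, hn⟩ := ih
    obtain ⟨t, ht⟩ := hn.dvd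
    rcases Int.even_or_odd t with he | ho
    · refine ⟨n, Int.ModEq.symm (Int.modEq_of_dvd ?_)⟩
      obtain ⟨u, hu⟩ := he
      exact ⟨-u, by linear_combination -ht - (2:ℤ) ^ (σ + 3) * hu⟩
    · obtain ⟨m, hmodd, hm⟩ := three_pow_two_pow σ
      refine ⟨n + 2 ^ (σ + 1), Int.ModEq.symm (Int.modEq_of_dvd ?_)⟩
      have key : w - 3 ^ (n + 2 ^ (σ + 1)) * j
          = 2 ^ (σ + 3) * (t - 3 ^ n * j * m) := by
        linear_combination ht - 3 ^ n * j * hm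
      have hodd2 : Odd ((3:ℤ) ^ n * j * m) :=
        (((by decide : Odd (3:ℤ)).pow).mul hj).mul hmodd
      obtain ⟨u, hu⟩ := ho.sub_odd hodd2
      exact ⟨-u, by linear_combination -key - (2:ℤ) ^ (σ + 3) * hu⟩

lemma norm_lb {r : ℝ} (h1 : 1/4 ≤ r) (h2 : r ≤ 3/4) :
    1/4 ≤ ‖(r : AddCircle (1:ℝ))‖ := by
  rw [AddCircle.norm_eq]
  simp only [inv_one, one_mul, mul_one]
  have hr : round r = 0 ∨ round r = 1 := by
    have h3 : (0:ℤ) ≤ round r := by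
      rw [round_eq]
      exact Int.le_floor.2 (by push_cast; linarith)
    have h4 : round r < 2 := by
      rw [round_eq]
      exact Int.floor_lt.2 (by push_cast; linarith)
    omega
  rcases hr with h | h <;> rw [h] <;> push_cast
  · rw [sub_zero, abs_of_nonneg (by linarith)]; linarith
  · rw [abs_sub_comm, abs_of_nonneg (by linarith)]; linarith

lemma dist_coe_le (u v : ℝ) : dist (u : AddCircle (1:ℝ)) (v : AddCircle (1:ℝ)) ≤ |u - v| := by
  rw [dist_eq_norm, ← AddCircle.coe_sub]
  exact (QuotientAddGroup.norm_mk_le_norm).trans_eq (Real.norm_eq_abs _)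

lemma coe_int_zero (c : ℤ) : ((c : ℝ) : AddCircle (1:ℝ)) = 0 :=
  (AddCircle.coe_eq_zero_iff (1:ℝ)).2 ⟨c, by simp⟩

lemma point_in_half (s n : ℕ) (j : ℤ) (hs : 1 ≤ s)
    (hmain : (3:ℤ)^n * j ≡ ((mrev (s-1) : ℕ) : ℤ) [ZMOD 2^s])
    (a b : ℕ) (hab : a + b = n) :
    ∃ t : ℝ, 0 ≤ t ∧ t ≤ 1/2 ∧
      ((2^a * 3^b : ℕ) : ℕ) • (((j : ℝ) / 2^s : ℝ) : AddCircle (1:ℝ))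
        = ((t : ℝ) : AddCircle (1:ℝ)) := by
  have hsmul : ∀ r : ℝ, ((2^a * 3^b : ℕ) : ℕ) • ((r : ℝ) : AddCircle (1:ℝ))
      = ((((2^a * 3^b : ℕ) : ℝ) * r : ℝ) : AddCircle (1:ℝ)) := by
    intro r; rw [← AddCircle.coe_nsmul]; norm_num
  by_cases hcase : s ≤ a
  · refine ⟨0, le_refl 0, by norm_num, ?_⟩
    rw [hsmul]
    have key : ((2^a * 3^b : ℕ) : ℝ) * ((j:ℝ) / 2^s) = ((2^(a-s) * 3^b * j : ℤ) : ℝ) := by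
      push_cast
      rw [show a = s + (a - s) by omega]
      rw [pow_add]
      field_simp
      rw [Nat.add_sub_cancel_left]
      ring
    rw [key, coe_int_zero]
    norm_num
  · push_neg at hcase
    set k := s - a with hk
    have hk1 : 1 ≤ k := by omega
    set m' := mrev (s - 1 - a) with hm'
    have h1 : (3:ℤ)^n * j ≡ ((mrev (s-1) : ℕ) : ℤ) [ZMOD 2^k] :=
      hmain.of_dvd (pow_dvd_pow 2 (by omega))
    have h2n : mrev (s-1) ≡ 3 ^ a * m' [MOD 2 ^ k] := by
      have := mrev_cong (s - 1 - a) a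
      rw [show s - 1 - a + a = s - 1 by omega, show s - 1 - a + 1 = k by omega] at this
      exact this
    have h2 : ((mrev (s-1) : ℕ) : ℤ) ≡ (3:ℤ) ^ a * (m' : ℤ) [ZMOD 2^k] := by
      have h2' := Int.natCast_modEq_iff.2 h2n
      push_cast at h2'
      exact h2'
    have h3 : (3:ℤ)^a * ((3:ℤ)^b * j) ≡ (3:ℤ)^a * (m' : ℤ) [ZMOD 2^k] := by
      have heq : (3:ℤ)^a * ((3:ℤ)^b * j) = (3:ℤ)^n * j := by
        rw [← mul_assoc, ← pow_add, hab]
      rw [heq]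
      exact h1.trans h2
    have hg : Int.gcd ((2:ℤ)^k) ((3:ℤ)^a) = 1 := by
      have : Nat.Coprime (2^k) (3^a) := Nat.Coprime.pow k a (by norm_num)
      simpa [Int.gcd, Int.natAbs_pow] using this
    have h4 : (3:ℤ)^b * j ≡ (m' : ℤ) [ZMOD 2^k] := by
      have := Int.ModEq.cancel_left_div_gcd (by positivity : (0:ℤ) < 2^k) h3
      rwa [hg, Nat.cast_one, Int.ediv_one] at this
    obtain ⟨c, hc⟩ := h4.dvd
    refine ⟨(m' : ℝ) / 2^k, by positivity, ?_, ?_⟩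
    · have hle : (m' : ℝ) ≤ 2^(k-1) := by
        have := mrev_le (s - 1 - a)
        have hh : (m' : ℝ) ≤ (2:ℝ)^(s-1-a) := by exact_mod_cast this
        rwa [show s - 1 - a = k - 1 by omega] at hh
      have h2k : (2:ℝ)^k = 2 * 2^(k-1) := by
        rw [← pow_succ']; congr 1; omega
      rw [div_le_iff₀ (by positivity)]
      rw [h2k]; linarith
    · rw [hsmul]
      have hreal : ((3:ℤ)^b * j : ℤ) = (m' : ℤ) - 2^k * c := by linarith [hc]
      have hreal2 : ((3:ℝ)^b * (j:ℝ)) = (m' : ℝ) - 2^k * c := by exact_mod_cast hreal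
      have hss : (2:ℝ)^s = 2^a * 2^k := by
        rw [← pow_add, show a + k = s by omega]
      have e1 : ((2:ℝ)^a * 3^b) * ((j:ℝ)/2^s) = ((3:ℝ)^b * (j:ℝ))/2^k := by
        rw [hss]; field_simp
      have key : ((2^a * 3^b : ℕ) : ℝ) * ((j:ℝ) / 2^s)
          = (m' : ℝ) / 2^k + ((-c : ℤ) : ℝ) := by
        push_cast
        rw [e1, hreal2]
        field_simp
        ring
      rw [key, AddCircle.coe_add, coe_int_zero, add_zero]

lemma mIter_repr {X : Type*} [AddCommMonoid X] (c d : ℕ) (n : ℕ) (x : X) :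
    ∀ z ∈ mIter (fun u : X => c • u) (fun u : X => d • u) n x,
      ∃ a b : ℕ, a + b = n ∧ z = (c ^ a * d ^ b) • x := by
  induction n with
  | zero =>
    rintro z rfl
    exact ⟨0, 0, rfl, by simp⟩
  | succ n ih =>
    rintro z (⟨w, hw, rfl⟩ | ⟨w, hw, rfl⟩)
    · obtain ⟨a, b, hab, rfl⟩ := ih w hw
      exact ⟨a + 1, b, by omega, by show c • _ = _; rw [smul_smul]; ring_nf⟩
    · obtain ⟨a, b, hab, rfl⟩ := ih w hw
      exact ⟨a, b + 1, by omega, by show d • _ = _; rw [smul_smul]; ring_nf⟩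

lemma pow_mem {X : Type*} [AddCommMonoid X] (c : ℕ) (f₂ : X → X) (n : ℕ) (y : X) :
    (c ^ n) • y ∈ mIter (fun u : X => c • u) f₂ n y := by
  induction n with
  | zero => simp [mIter]
  | succ n ih =>
    exact Set.mem_union_left _ ⟨c ^ n • y, ih, by show c • _ = _; rw [smul_smul, ← pow_succ']⟩

end Stmt17Aux

open Stmt17Aux in
/-- on the circle `ℝ/ℤ` with its quotient (arc-length) metric, the
multiple mapping `F = {x ↦ 2x, x ↦ 3x}` is Hausdorff metric sensitive. -/
theorem stmt17 :
    MSensitive (fun x : AddCircle (1 : ℝ) => 2 • x)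
      (fun x : AddCircle (1 : ℝ) => 3 • x) := by
  refine ⟨1/5, by norm_num, ?_⟩
  intro U hUopen hUne
  obtain ⟨zc, hzU⟩ := hUne
  obtain ⟨ε, hε0, hball⟩ := Metric.isOpen_iff.1 hUopen zc hzU
  obtain ⟨Z, hZ⟩ : ∃ Z : ℝ, ((Z : ℝ) : AddCircle (1:ℝ)) = zc :=
    QuotientAddGroup.mk_surjective zc
  -- choose the scale s = σ + 3 with 2^s > 16/ε
  obtain ⟨N, hN⟩ : ∃ N : ℕ, 16 / ε < 2 ^ N := pow_unbounded_of_one_lt _ one_lt_two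
  set σ : ℕ := N with hσ
  set s : ℕ := σ + 3 with hsdef
  have hs1 : 1 ≤ s := by omega
  have hs2 : (16 / ε : ℝ) < 2 ^ s :=
    lt_of_lt_of_le hN (pow_le_pow_right₀ one_le_two (by omega))
  have h2spos : (0:ℝ) < 2 ^ s := by positivity
  have hεs : (8 : ℝ) / 2 ^ s < ε := by
    rw [div_lt_iff₀ h2spos]
    rw [div_lt_iff₀ hε0] at hs2
    nlinarith
  -- the target residue W and the rational point x = j / 2^s
  set W : ℤ := ((mrev (s-1) : ℕ) : ℤ) with hWdef
  have hWodd : Odd W := by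
    have := mrev_odd (s-1)
    rw [Int.odd_iff]
    omega
  set K : ℤ := ⌈(2^s * Z - (W:ℝ)) / 8⌉ with hKdef
  set j : ℤ := W + 8 * K with hjdef
  have hjodd : Odd j := by
    rcases hWodd with ⟨w, hw⟩
    exact ⟨w + 4*K, by omega⟩
  have hj8 : j ≡ W [ZMOD 8] := by
    show j % 8 = W % 8
    omega
  obtain ⟨n₀, hn₀⟩ := exists_pow_three_mul j W hjodd hj8 σ
  -- bump n₀ to n ≥ s using 3^(2^(σ+1)) ≡ 1 [ZMOD 2^s]
  obtain ⟨mm, hmmodd, hmm⟩ := three_pow_two_pow σ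
  set T : ℕ := 2 ^ (σ + 1) with hTdef
  have hT : (3:ℤ)^T ≡ 1 [ZMOD 2^s] := by
    refine Int.ModEq.symm (Int.modEq_of_dvd ?_)
    exact ⟨mm, by rw [hmm]; ring⟩
  set n : ℕ := n₀ + T * s with hndef
  have hn_main : (3:ℤ)^n * j ≡ W [ZMOD 2^s] := by
    have hpow : (3:ℤ)^n = 3^n₀ * ((3:ℤ)^T)^s := by
      rw [hndef, pow_add, pow_mul]
    have h1s : ((3:ℤ)^T)^s ≡ 1 [ZMOD 2^s] := by
      simpa using hT.pow s
    calc (3:ℤ)^n * j = (3^n₀ * j) * ((3:ℤ)^T)^s := by rw [hpow]; ring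
      _ ≡ W * 1 [ZMOD 2^s] := hn₀.mul h1s
      _ = W := mul_one W
  have hTpos : 1 ≤ T := Nat.one_le_two_pow
  have hsn : s ≤ n := by
    calc s ≤ T * s := Nat.le_mul_of_pos_left s (by omega)
      _ ≤ n := by omega
  have hn1 : 1 ≤ n := le_trans hs1 hsn
  -- the point x
  set px : ℝ := (j : ℝ) / 2 ^ s with hpxdef
  have hKup : ((K:ℝ)) < (2^s * Z - (W:ℝ)) / 8 + 1 := Int.ceil_lt_add_one _
  have hKlo : (2^s * Z - (W:ℝ)) / 8 ≤ (K:ℝ) := Int.le_ceil _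
  have hjZ0 : 0 ≤ (j:ℝ) - 2^s * Z := by
    have : (j:ℝ) = (W:ℝ) + 8 * K := by push_cast [hjdef]; ring
    rw [this]; linarith
  have hjZ8 : (j:ℝ) - 2^s * Z < 8 := by
    have : (j:ℝ) = (W:ℝ) + 8 * K := by push_cast [hjdef]; ring
    rw [this]; linarith
  have hpxZ : |px - Z| < ε := by
    have hpx1 : px - Z = ((j:ℝ) - 2^s * Z) / 2^s := by
      rw [hpxdef]; field_simp
    rw [hpx1, abs_of_nonneg (div_nonneg hjZ0 (le_of_lt h2spos))]
    calc ((j:ℝ) - 2^s * Z) / 2^s ≤ 8 / 2^s := by gcongr <;> linarith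
      _ < ε := hεs
  have hxU : ((px : ℝ) : AddCircle (1:ℝ)) ∈ U := by
    apply hball
    rw [Metric.mem_ball, ← hZ]
    exact lt_of_le_of_lt (dist_coe_le px Z) hpxZ
  -- the point y
  have h2npos : (0:ℝ) < 2 ^ n := by positivity
  have h2sn : (2:ℝ)^s ≤ 2^n := pow_le_pow_right₀ one_le_two hsn
  set l : ℤ := ⌈2^n * Z - 3/4⌉ with hldef
  set py : ℝ := (3/4 + (l:ℝ)) / 2 ^ n with hpydef
  have hlup : ((l:ℝ)) < 2^n * Z - 3/4 + 1 := Int.ceil_lt_add_one _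
  have hllo : 2^n * Z - 3/4 ≤ (l:ℝ) := Int.le_ceil _
  have hpyZ : |py - Z| < ε := by
    have hpy1 : py - Z = ((3/4 + (l:ℝ)) - 2^n * Z) / 2^n := by
      rw [hpydef]; field_simp
    have hnum0 : (0:ℝ) ≤ (3/4 + (l:ℝ)) - 2^n * Z := by linarith
    have hnum1 : (3/4 + (l:ℝ)) - 2^n * Z ≤ 1 := by linarith
    have h18 : (1:ℝ)/2^s ≤ 8/2^s := by gcongr <;> norm_num
    rw [hpy1, abs_of_nonneg (div_nonneg hnum0 (le_of_lt h2npos))]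
    calc ((3/4 + (l:ℝ)) - 2^n * Z) / 2^n ≤ 1 / 2^n := by gcongr <;> linarith
      _ ≤ 1 / 2^s := one_div_le_one_div_of_le h2spos h2sn
      _ < ε := by linarith
  have hyU : ((py : ℝ) : AddCircle (1:ℝ)) ∈ U := by
    apply hball
    rw [Metric.mem_ball, ← hZ]
    exact lt_of_le_of_lt (dist_coe_le py Z) hpyZ
  refine ⟨_, hxU, _, hyU, n, hn1, ?_⟩
  -- the special point 3/4 belongs to F^n(y)
  set b : AddCircle (1:ℝ) := ((3/4 : ℝ) : AddCircle (1:ℝ)) with hbdef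
  set A : Set (AddCircle (1:ℝ)) :=
    mIter (fun x : AddCircle (1:ℝ) => 2 • x) (fun x : AddCircle (1:ℝ) => 3 • x) n (↑px)
    with hAdef
  set B : Set (AddCircle (1:ℝ)) :=
    mIter (fun x : AddCircle (1:ℝ) => 2 • x) (fun x : AddCircle (1:ℝ) => 3 • x) n (↑py)
    with hBdef
  have hbB : b ∈ B := by
    have hmem := pow_mem 2 (fun x : AddCircle (1:ℝ) => 3 • x) n ((py : ℝ) : AddCircle (1:ℝ))
    have hsm : (2^n : ℕ) • ((py : ℝ) : AddCircle (1:ℝ)) = b := by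
      rw [← AddCircle.coe_nsmul]
      have : (2^n : ℕ) • py = 3/4 + (l:ℝ) := by
        rw [nsmul_eq_mul, hpydef]
        push_cast
        field_simp
      rw [this, AddCircle.coe_add, coe_int_zero, add_zero]
    rwa [hsm] at hmem
  have hfar : ∀ z ∈ A, 1/4 ≤ dist b z := by
    intro z hz
    obtain ⟨a, b', hab, rfl⟩ := mIter_repr 2 3 n ((px : ℝ) : AddCircle (1:ℝ)) z hz
    obtain ⟨t, ht0, ht2, heq⟩ := point_in_half s n j hs1 hn_main a b' hab
    rw [heq, hbdef, dist_eq_norm, ← AddCircle.coe_sub]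
    exact norm_lb (by linarith) (by linarith)
  -- conclude via the Hausdorff distance
  have hAne : A.Nonempty := mIter_nonempty _ _ _ _
  have hBne : B.Nonempty := mIter_nonempty _ _ _ _
  have hAb : Bornology.IsBounded A := (mIter_finite _ _ _ _).isBounded
  have hBb : Bornology.IsBounded B := (mIter_finite _ _ _ _).isBounded
  have hfin : EMetric.hausdorffEdist B A ≠ ⊤ :=
    Metric.hausdorffEdist_ne_top_of_nonempty_of_bounded hBne hAne hBb hAb
  have h1 : Metric.infDist b A ≤ Metric.hausdorffDist B A :=
    Metric.infDist_le_hausdorffDist_of_mem hbB hfin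
  have h2 : 1/4 ≤ Metric.infDist b A := by
    by_contra hcon
    push_neg at hcon
    obtain ⟨z, hzA, hzlt⟩ := (Metric.infDist_lt_iff hAne).1 hcon
    exact absurd hzlt (not_lt.2 (hfar z hzA))
  have hdist : dist
      (mIterNC (fun x : AddCircle (1:ℝ) => 2 • x) (fun x : AddCircle (1:ℝ) => 3 • x) n (↑px))
      (mIterNC (fun x : AddCircle (1:ℝ) => 2 • x) (fun x : AddCircle (1:ℝ) => 3 • x) n (↑py))
      = Metric.hausdorffDist A B := Metric.NonemptyCompacts.dist_eq
  rw [hdist, Metric.hausdorffDist_comm]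
  linarith
end
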